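/- arXiv:2404.19476 — 5 statements merged into one kernel-verified Lean document; each statement's English description precedes it below -/
import Mathlib

section
/- Let G' be an extended 1-dimensional hierarchical graph with n odd, with parts A = S_0 ∪ S_2 ∪ ⋯ ∪ S_{n−1} and B = S_1 ∪ S_3 ∪ ⋯ ∪ S_n. Define the flattened star states ψ̄_i = √(W_i) |L_i⟩ + √(W_{i+1}) |L_{i+1}⟩ for 0 ≤ i ≤ n, and let R_Ā (resp. R_B̄) be the unitary on ℂ^{E ∪ E'} acting as −1 on span{ψ̄_i : i even, 0 ≤ i ≤ n} (resp. span{ψ̄_i : i odd, 0 ≤ i ≤ n}) and as the identity on its orthogonal complement. Then for every x in the span of {|L_0⟩, |L_1⟩, …, |L_{n+1}⟩}, one has R_A(G') x = R_Ā x and R_B(G') x = R_B̄ x; that is, the quantum walk reflections of G' restricted to the span of the layer-uniform vectors coincide with the reflections of the flattened line graph. -/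
/-!
**Statement 14.**
Let `G'` be an extended 1-dimensional hierarchical graph with `n` odd, with parts
`A = S_0 ∪ S_2 ∪ ⋯ ∪ S_{n−1}` and `B = S_1 ∪ S_3 ∪ ⋯ ∪ S_n`.  Define the flattened star
states `ψ̄_i = √(W_i)|L_i⟩ + √(W_{i+1})|L_{i+1}⟩` for `0 ≤ i ≤ n`, and let `R_Ā`
(resp. `R_B̄`) be the unitary acting as `−1` on `span{ψ̄_i : i ≤ n even}`
(resp. `span{ψ̄_i : i ≤ n odd}`) and as the identity on its orthogonal complement.  Then for
every `x` in the span of `{|L_0⟩, …, |L_{n+1}⟩}` one has `R_A(G') x = R_Ā x` and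
`R_B(G') x = R_B̄ x`: the quantum walk reflections of `G'` restricted to the span of the
layer-uniform vectors coincide with the reflections of the flattened line graph.

The hierarchical graph is modelled abstractly: vertices `V` carry a layer `vlayer u ≤ n`,
edges `E` carry a layer `elayer e ∈ {1, …, n}` and endpoint maps `lo` (in `S_{elayer e − 1}`)
and `hi` (in `S_{elayer e}`); `s` and `t` are the unique vertices of layers `0` and `n`;
every vertex of `S_i` (`i < n`) has exactly `d⁺_i` up-edges and every vertex of `S_i`
(`i ≥ 1`) has exactly `d⁻_i` down-edges.  The dangling edge `ss'` (layer `L_0`) has weight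
`W_0 > 0` and `t't` (layer `L_{n+1}`) has weight `W_{n+1} > 0`; all original edges have
weight 1 and `W_i = |L_i|` for `1 ≤ i ≤ n`.  The walk space is
`EuclideanSpace ℂ (E ⊕ Bool)` (`Sum.inr false = ss'`, `Sum.inr true = t't`);
`|L_i⟩ = (1/√(W_i)) ∑_{e ∈ L_i} |e⟩` and `ψ_u = ∑_{e ∼ u} √(w_e) |e⟩`.  All four
reflections `R_A`, `R_B`, `R_Ā`, `R_B̄` are specified by their defining properties.
-/

noncomputable section

namespace Stmt14
open Finset
open scoped InnerProductSpace

variable {V E : Type*} [Fintype V] [Fintype E] [DecidableEq V] [DecidableEq E]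

def ket (x : E ⊕ Bool) : EuclideanSpace ℂ (E ⊕ Bool) := EuclideanSpace.single x 1

/-- The weight `W_i` of the `i`-th edge layer: `W_0` and `W_{n+1}` are the weights of the
dangling edges, and `W_i = |L_i|` for `1 ≤ i ≤ n`. -/
def Wt (n : ℕ) (elayer : E → ℕ) (W0 Wn1 : ℝ) (i : ℕ) : ℝ :=
  if i = 0 then W0 else if i = n + 1 then Wn1
  else ((Finset.univ.filter fun e => elayer e = i).card : ℝ)

/-- The normalized layer-uniform state `|L_i⟩`. -/
def Lket (n : ℕ) (elayer : E → ℕ) (W0 Wn1 : ℝ) (i : ℕ) : EuclideanSpace ℂ (E ⊕ Bool) :=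
  if i = 0 then ket (Sum.inr false) else if i = n + 1 then ket (Sum.inr true)
  else ((Real.sqrt (Wt n elayer W0 Wn1 i))⁻¹ : ℂ) •
    ∑ e ∈ Finset.univ.filter (fun e => elayer e = i), ket (Sum.inl e)

/-- The star state `ψ_u` of a vertex of the extended hierarchical graph. -/
def psi (lo hi : E → V) (s t : V) (W0 Wn1 : ℝ) (u : V) : EuclideanSpace ℂ (E ⊕ Bool) :=
  (∑ e ∈ Finset.univ.filter (fun e => hi e = u), ket (Sum.inl e)) +
  (∑ e ∈ Finset.univ.filter (fun e => lo e = u), ket (Sum.inl e)) +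
  (if u = s then (Real.sqrt W0 : ℂ) • ket (Sum.inr false) else 0) +
  (if u = t then (Real.sqrt Wn1 : ℂ) • ket (Sum.inr true) else 0)

/-- The flattened star state `ψ̄_i = √(W_i)|L_i⟩ + √(W_{i+1})|L_{i+1}⟩`. -/
def psibar (n : ℕ) (elayer : E → ℕ) (W0 Wn1 : ℝ) (i : ℕ) : EuclideanSpace ℂ (E ⊕ Bool) :=
  (Real.sqrt (Wt n elayer W0 Wn1 i) : ℂ) • Lket n elayer W0 Wn1 i
    + (Real.sqrt (Wt n elayer W0 Wn1 (i + 1)) : ℂ) • Lket n elayer W0 Wn1 (i + 1)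

lemma inner_ket_ket (a b : E ⊕ Bool) :
    ⟪ket a, (ket b : EuclideanSpace ℂ (E ⊕ Bool))⟫_ℂ = if a = b then 1 else 0 := by
  rw [ket, ket, EuclideanSpace.inner_single_left, EuclideanSpace.single_apply]
  simp [eq_comm]

lemma mul_inv_sqrt (w : ℝ) (hw : 0 ≤ w) : w * (Real.sqrt w)⁻¹ = Real.sqrt w := by
  rcases eq_or_lt_of_le hw with h | h
  · simp [← h]
  · have hs : Real.sqrt w ≠ 0 := ne_of_gt (Real.sqrt_pos.mpr h)
    nth_rewrite 1 [← Real.mul_self_sqrt hw]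
    rw [mul_assoc, mul_inv_cancel₀ hs, mul_one]

lemma inner_ket_sum (a : E ⊕ Bool) (sf : Finset E) :
    ⟪ket a, ∑ f ∈ sf, (ket (Sum.inl f) : EuclideanSpace ℂ (E ⊕ Bool))⟫_ℂ =
      if ∃ e ∈ sf, a = Sum.inl e then 1 else 0 := by
  rw [inner_sum, Finset.sum_congr rfl (fun f _ => inner_ket_ket a (Sum.inl f))]
  rcases a with e | b
  · simp only [Sum.inl.injEq]
    rw [Finset.sum_ite_eq sf e (fun _ => (1:ℂ))]
    simp
  · simp

section Aux
variable (n : ℕ) (elayer : E → ℕ) (W0 Wn1 : ℝ)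

lemma Wt_nonneg (h0 : 0 < W0) (h1 : 0 < Wn1) (i : ℕ) : 0 ≤ Wt n elayer W0 Wn1 i := by
  unfold Wt; split_ifs <;> positivity

lemma inner_sum_Lket (s : Finset E) (a : ℕ) (ha1 : a ≠ 0) (ha2 : a ≤ n)
    (hs : ∀ e ∈ s, elayer e = a) (j : ℕ) :
    ⟪∑ e ∈ s, ket (Sum.inl e), Lket n elayer W0 Wn1 j⟫_ℂ =
      if j = a then (s.card : ℂ) * (((Real.sqrt (Wt n elayer W0 Wn1 a))⁻¹ : ℝ) : ℂ) else 0 := by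
  unfold Lket
  rcases eq_or_ne j 0 with rfl | hj0
  · rw [if_pos rfl, if_neg (by omega : ¬ (0 = a)), sum_inner]
    exact Finset.sum_eq_zero fun e _ => by rw [inner_ket_ket]; simp
  · rcases eq_or_ne j (n+1) with rfl | hjn
    · rw [if_neg hj0, if_pos rfl, if_neg (by omega : ¬ (n+1 = a)), sum_inner]
      exact Finset.sum_eq_zero fun e _ => by rw [inner_ket_ket]; simp
    · rw [if_neg hj0, if_neg hjn, sum_inner]
      have key : ∀ e ∈ s, ⟪ket (Sum.inl e), ((Real.sqrt (Wt n elayer W0 Wn1 j))⁻¹ : ℂ) •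
          ∑ f ∈ Finset.univ.filter (fun f => elayer f = j),
            (ket (Sum.inl f) : EuclideanSpace ℂ (E ⊕ Bool))⟫_ℂ
          = (((Real.sqrt (Wt n elayer W0 Wn1 j))⁻¹ : ℝ) : ℂ) * (if elayer e = j then 1 else 0) := by
        intro e he
        rw [inner_smul_right, inner_ket_sum, Complex.ofReal_inv]
        congr 1
        by_cases h : elayer e = j
        · rw [if_pos ⟨e, Finset.mem_filter.mpr ⟨Finset.mem_univ e, h⟩, rfl⟩, if_pos h]
        · rw [if_neg, if_neg h]
          rintro ⟨f, hf, hef⟩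
          exact h (by rw [Sum.inl.injEq] at hef; rw [hef]; exact (Finset.mem_filter.mp hf).2)
      rw [Finset.sum_congr rfl key]
      rcases eq_or_ne j a with rfl | hja
      · rw [if_pos rfl,
          Finset.sum_congr rfl (fun e he => by rw [if_pos (hs e he), mul_one])]
        simp [mul_comm]
      · rw [if_neg hja,
          Finset.sum_congr rfl (fun e he => by
            rw [if_neg (by rw [hs e he]; exact fun h => hja h.symm), mul_zero])]
        simp

lemma inner_inr_Lket (b : Bool) (j : ℕ) :
    ⟪(ket (Sum.inr b) : EuclideanSpace ℂ (E ⊕ Bool)), Lket n elayer W0 Wn1 j⟫_ℂ =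
      if (j = 0 ∧ b = false) ∨ (j = n + 1 ∧ b = true) then 1 else 0 := by
  unfold Lket
  rcases eq_or_ne j 0 with rfl | hj0
  · rw [if_pos rfl, inner_ket_ket]
    cases b <;> simp
  · rcases eq_or_ne j (n+1) with rfl | hjn
    · rw [if_neg hj0, if_pos rfl, inner_ket_ket]
      cases b <;> simp [hj0]
    · rw [if_neg hj0, if_neg hjn, inner_smul_right, inner_ket_sum]
      simp [hj0, hjn]



lemma inner_Lket_Lket (h0 : 0 < W0) (h1 : 0 < Wn1) (a j : ℕ) (ha : a ≤ n + 1) :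
    ⟪Lket n elayer W0 Wn1 a, Lket n elayer W0 Wn1 j⟫_ℂ =
      if a = j ∧ Wt n elayer W0 Wn1 a ≠ 0 then 1 else 0 := by
  rcases eq_or_ne a 0 with rfl | ha0
  · rw [show Lket n elayer W0 Wn1 0 = ket (Sum.inr false) from if_pos rfl, inner_inr_Lket]
    have : Wt n elayer W0 Wn1 0 = W0 := if_pos rfl
    by_cases hj : (0:ℕ) = j
    · simp [← hj, this, ne_of_gt h0]
    · simp only [inner_inr_Lket] at *
      simp [hj]
      omega
  · rcases eq_or_ne a (n+1) with rfl | han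
    · rw [show Lket n elayer W0 Wn1 (n+1) = ket (Sum.inr true) from by
        rw [Lket, if_neg ha0, if_pos rfl], inner_inr_Lket]
      have : Wt n elayer W0 Wn1 (n+1) = Wn1 := by rw [Wt, if_neg ha0, if_pos rfl]
      by_cases hj : n + 1 = j
      · simp [← hj, this, ne_of_gt h1]
      · simp [hj]
        omega
    · rw [show Lket n elayer W0 Wn1 a = ((Real.sqrt (Wt n elayer W0 Wn1 a))⁻¹ : ℂ) •
          ∑ e ∈ Finset.univ.filter (fun e => elayer e = a), ket (Sum.inl e) from by
          rw [Lket, if_neg ha0, if_neg han]]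
      rw [inner_smul_left, inner_sum_Lket n elayer W0 Wn1 _ a ha0 (by omega)
          (fun e he => (Finset.mem_filter.mp he).2) j]
      have hwa : Wt n elayer W0 Wn1 a =
          ((Finset.univ.filter fun e => elayer e = a).card : ℝ) := by
        rw [Wt, if_neg ha0, if_neg han]
      have hnn : (0:ℝ) ≤ Wt n elayer W0 Wn1 a := hwa ▸ Nat.cast_nonneg _
      by_cases hj : a = j
      · rw [if_pos hj.symm]
        subst hj
        by_cases hw : Wt n elayer W0 Wn1 a = 0
        · rw [if_neg (fun h => h.2 hw), hw]
          simp
        · have hccard : (((Finset.univ.filter fun e => elayer e = a).card : ℕ) : ℂ)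
              = ((Wt n elayer W0 Wn1 a : ℝ) : ℂ) := by
            rw [hwa]; norm_cast
          rw [if_pos ⟨rfl, hw⟩, map_inv₀, Complex.conj_ofReal, hccard]
          have hsne : Real.sqrt (Wt n elayer W0 Wn1 a) ≠ 0 :=
            ne_of_gt (Real.sqrt_pos.mpr (lt_of_le_of_ne hnn (Ne.symm hw)))
          rw [← Complex.ofReal_inv, ← Complex.ofReal_mul, ← Complex.ofReal_mul,
            ← Complex.ofReal_one]
          congr 1
          rw [mul_inv_sqrt _ hnn, inv_mul_cancel₀ hsne]
      · rw [if_neg (fun h => hj h.symm), mul_zero, if_neg (fun h => hj h.1)]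

lemma inner_psibar_Lket (h0 : 0 < W0) (h1 : 0 < Wn1) (i j : ℕ) (hi : i ≤ n) :
    ⟪psibar n elayer W0 Wn1 i, Lket n elayer W0 Wn1 j⟫_ℂ =
      if j = i then ((Real.sqrt (Wt n elayer W0 Wn1 i) : ℝ) : ℂ)
      else if j = i + 1 then ((Real.sqrt (Wt n elayer W0 Wn1 (i+1)) : ℝ) : ℂ) else 0 := by
  simp only [psibar]
  rw [inner_add_left, inner_smul_left, inner_smul_left, Complex.conj_ofReal,
    Complex.conj_ofReal, inner_Lket_Lket n elayer W0 Wn1 h0 h1 i j (by omega),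
    inner_Lket_Lket n elayer W0 Wn1 h0 h1 (i+1) j (by omega)]
  rcases eq_or_ne j i with rfl | hji
  · by_cases hw : Wt n elayer W0 Wn1 j = 0
    · rw [if_neg (fun h => h.2 hw), mul_zero, zero_add,
        if_neg (show ¬(j + 1 = j ∧ Wt n elayer W0 Wn1 (j + 1) ≠ 0) from
          fun h => absurd h.1 (by omega)), mul_zero, if_pos (rfl : j = j)]
      simp [hw]
    · rw [if_pos ⟨rfl, hw⟩, mul_one,
        if_neg (show ¬(j + 1 = j ∧ Wt n elayer W0 Wn1 (j + 1) ≠ 0) from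
          fun h => absurd h.1 (by omega)), mul_zero, add_zero, if_pos (rfl : j = j)]
  · rw [if_neg (fun h => hji h.1.symm), mul_zero, zero_add, if_neg hji]
    rcases eq_or_ne j (i+1) with rfl | hji1
    · by_cases hw : Wt n elayer W0 Wn1 (i+1) = 0
      · rw [if_neg (fun h => h.2 hw), mul_zero, if_pos (rfl : i + 1 = i + 1)]
        simp [hw]
      · rw [if_pos ⟨rfl, hw⟩, mul_one, if_pos (rfl : i + 1 = i + 1)]
    · rw [if_neg (fun h => hji1 h.1.symm), mul_zero, if_neg hji1]

lemma inner_psibar_psibar (h0 : 0 < W0) (h1 : 0 < Wn1) (i j : ℕ) (hi : i ≤ n)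
    (hsep : i ≠ j → j ≠ i + 1 ∧ i ≠ j + 1) :
    ⟪psibar n elayer W0 Wn1 i, psibar n elayer W0 Wn1 j⟫_ℂ =
      if i = j then ((Wt n elayer W0 Wn1 i + Wt n elayer W0 Wn1 (i+1) : ℝ) : ℂ) else 0 := by
  have expand : psibar n elayer W0 Wn1 j =
      (Real.sqrt (Wt n elayer W0 Wn1 j) : ℂ) • Lket n elayer W0 Wn1 j
      + (Real.sqrt (Wt n elayer W0 Wn1 (j + 1)) : ℂ) • Lket n elayer W0 Wn1 (j + 1) := rfl
  rw [expand, inner_add_right, inner_smul_right, inner_smul_right,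
    inner_psibar_Lket n elayer W0 Wn1 h0 h1 i j hi,
    inner_psibar_Lket n elayer W0 Wn1 h0 h1 i (j+1) hi]
  rcases eq_or_ne i j with rfl | hij
  · rw [if_pos (rfl : i = i), if_neg (by omega : ¬(i + 1 = i)),
      if_pos (rfl : i + 1 = i + 1), if_pos (rfl : i = i),
      ← Complex.ofReal_mul, ← Complex.ofReal_mul, ← Complex.ofReal_add,
      Real.mul_self_sqrt (Wt_nonneg n elayer W0 Wn1 h0 h1 i),
      Real.mul_self_sqrt (Wt_nonneg n elayer W0 Wn1 h0 h1 (i+1))]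
  · obtain ⟨hs1, hs2⟩ := hsep hij
    rw [if_neg (fun h => hij h.symm), if_neg hs1, mul_zero,
      if_neg (fun h => hs2 h.symm), if_neg (by omega : ¬(j + 1 = i + 1)),
      mul_zero, add_zero, if_neg hij]

lemma sqrt_smul_Lket (i : ℕ) (hi0 : i ≠ 0) (hin : i ≤ n) :
    (Real.sqrt (Wt n elayer W0 Wn1 i) : ℂ) • Lket n elayer W0 Wn1 i
      = ∑ e ∈ Finset.univ.filter (fun e => elayer e = i), ket (Sum.inl e) := by
  rw [Lket, if_neg hi0, if_neg (by omega), smul_smul]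
  have hwa : Wt n elayer W0 Wn1 i =
      ((Finset.univ.filter fun e => elayer e = i).card : ℝ) := by
    rw [Wt, if_neg hi0, if_neg (by omega)]
  by_cases hw : Wt n elayer W0 Wn1 i = 0
  · have hc : (Finset.univ.filter fun e => elayer e = i) = ∅ := by
      rw [← Finset.card_eq_zero]
      exact_mod_cast hwa ▸ hw
    simp [hc]
  · have hsne : Real.sqrt (Wt n elayer W0 Wn1 i) ≠ 0 :=
      ne_of_gt (Real.sqrt_pos.mpr (lt_of_le_of_ne (hwa ▸ Nat.cast_nonneg _) (Ne.symm hw)))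
    rw [mul_inv_cancel₀ (by exact_mod_cast Complex.ofReal_ne_zero.mpr hsne), one_smul]

end Aux

lemma sum_fiber {M : Type*} [AddCommMonoid M] (g : E → V) (p : V → Prop) [DecidablePred p]
    (f : E → M) :
    ∑ u ∈ Finset.univ.filter p, ∑ e ∈ Finset.univ.filter (fun e => g e = u), f e
      = ∑ e ∈ Finset.univ.filter (fun e => p (g e)), f e := by
  calc ∑ u ∈ Finset.univ.filter p, ∑ e ∈ Finset.univ.filter (fun e => g e = u), f e
      = ∑ u ∈ Finset.univ.filter p, ∑ e ∈ Finset.univ, if g e = u then f e else 0 := by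
        refine Finset.sum_congr rfl fun u _ => ?_
        rw [Finset.sum_filter]
    _ = ∑ e ∈ Finset.univ, ∑ u ∈ Finset.univ.filter p, if g e = u then f e else 0 :=
        Finset.sum_comm
    _ = ∑ e ∈ Finset.univ, if p (g e) then f e else 0 := by
        refine Finset.sum_congr rfl fun e _ => ?_
        rw [Finset.sum_ite_eq (Finset.univ.filter p) (g e) (fun _ => f e)]
        simp
    _ = ∑ e ∈ Finset.univ.filter (fun e => p (g e)), f e := (Finset.sum_filter _ _).symm

lemma card_fiber (g : E → V) (p : V → Prop) [DecidablePred p] :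
    (Finset.univ.filter (fun e => p (g e))).card
      = ∑ u ∈ Finset.univ.filter p, (Finset.univ.filter (fun e => g e = u)).card := by
  rw [Finset.card_eq_sum_ones, ← sum_fiber g p (fun _ => (1:ℕ))]
  exact Finset.sum_congr rfl fun u _ => (Finset.card_eq_sum_ones _).symm


section Graph
variable (n : ℕ) (vlayer : V → ℕ) (elayer : E → ℕ) (lo hi : E → V) (s t : V) (W0 Wn1 : ℝ)

lemma psi_s_eq (hn1 : 1 ≤ n)
    (hel : ∀ e, 1 ≤ elayer e ∧ elayer e ≤ n)
    (hlo : ∀ e, vlayer (lo e) = elayer e - 1)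
    (hhi : ∀ e, vlayer (hi e) = elayer e)
    (hs : vlayer s = 0) (hsu : ∀ u, vlayer u = 0 → u = s) (ht : vlayer t = n) :
    psi lo hi s t W0 Wn1 s = psibar n elayer W0 Wn1 0 := by
  have hst : s ≠ t := fun h => by rw [h, ht] at hs; omega
  have h1 : (Finset.univ.filter fun e => hi e = s) = ∅ := by
    rw [Finset.filter_eq_empty_iff]
    intro e _ he
    have h' := hhi e
    rw [he, hs] at h'
    have := (hel e).1
    omega
  have h2 : (Finset.univ.filter fun e => lo e = s)
      = (Finset.univ.filter fun e => elayer e = 1) := by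
    refine Finset.filter_congr fun e _ => ?_
    constructor
    · intro he
      have h' := hlo e
      rw [he, hs] at h'
      have := (hel e).1
      omega
    · intro he
      apply hsu
      rw [hlo e, he]
  rw [psi, h1, h2, Finset.sum_empty, zero_add, if_pos rfl, if_neg hst, add_zero]
  have hexp : psibar n elayer W0 Wn1 0 =
      (Real.sqrt (Wt n elayer W0 Wn1 0) : ℂ) • Lket n elayer W0 Wn1 0
      + (Real.sqrt (Wt n elayer W0 Wn1 1) : ℂ) • Lket n elayer W0 Wn1 1 := rfl
  rw [hexp, sqrt_smul_Lket n elayer W0 Wn1 1 one_ne_zero hn1,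
    show Lket n elayer W0 Wn1 0 = ket (Sum.inr false) from if_pos rfl,
    show Wt n elayer W0 Wn1 0 = W0 from if_pos rfl, add_comm]

lemma psi_t_eq (hn1 : 1 ≤ n)
    (hel : ∀ e, 1 ≤ elayer e ∧ elayer e ≤ n)
    (hlo : ∀ e, vlayer (lo e) = elayer e - 1)
    (hhi : ∀ e, vlayer (hi e) = elayer e)
    (hs : vlayer s = 0) (ht : vlayer t = n) (htu : ∀ u, vlayer u = n → u = t) :
    psi lo hi s t W0 Wn1 t = psibar n elayer W0 Wn1 n := by
  have hst : t ≠ s := fun h => by rw [h, hs] at ht; omega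
  have h1 : (Finset.univ.filter fun e => lo e = t) = ∅ := by
    rw [Finset.filter_eq_empty_iff]
    intro e _ he
    have h' := hlo e
    rw [he, ht] at h'
    have := (hel e).2
    have := (hel e).1
    omega
  have h2 : (Finset.univ.filter fun e => hi e = t)
      = (Finset.univ.filter fun e => elayer e = n) := by
    refine Finset.filter_congr fun e _ => ?_
    constructor
    · intro he
      have h' := hhi e
      rw [he, ht] at h'
      omega
    · intro he
      apply htu
      rw [hhi e, he]
  rw [psi, h1, h2, Finset.sum_empty, add_zero, if_neg hst, add_zero, if_pos rfl]
  have hexp : psibar n elayer W0 Wn1 n =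
      (Real.sqrt (Wt n elayer W0 Wn1 n) : ℂ) • Lket n elayer W0 Wn1 n
      + (Real.sqrt (Wt n elayer W0 Wn1 (n + 1)) : ℂ) • Lket n elayer W0 Wn1 (n + 1) := rfl
  rw [hexp, sqrt_smul_Lket n elayer W0 Wn1 n (by omega) le_rfl,
    show Lket n elayer W0 Wn1 (n + 1) = ket (Sum.inr true) from by
      rw [Lket, if_neg (by omega), if_pos rfl],
    show Wt n elayer W0 Wn1 (n + 1) = Wn1 from by
      rw [Wt, if_neg (by omega), if_pos rfl]]

lemma psibar_eq_sum
    (hel : ∀ e, 1 ≤ elayer e ∧ elayer e ≤ n)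
    (hlo : ∀ e, vlayer (lo e) = elayer e - 1)
    (hhi : ∀ e, vlayer (hi e) = elayer e)
    (hs : vlayer s = 0) (ht : vlayer t = n)
    (i : ℕ) (h1 : 1 ≤ i) (h2 : i < n) :
    psibar n elayer W0 Wn1 i
      = ∑ u ∈ Finset.univ.filter (fun u => vlayer u = i), psi lo hi s t W0 Wn1 u := by
  have step : ∀ u ∈ Finset.univ.filter (fun u => vlayer u = i),
      psi lo hi s t W0 Wn1 u =
        (∑ e ∈ Finset.univ.filter (fun e => hi e = u), ket (Sum.inl e)) +
        (∑ e ∈ Finset.univ.filter (fun e => lo e = u), ket (Sum.inl e)) := by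
    intro u hu
    have hvu := (Finset.mem_filter.mp hu).2
    have hus : u ≠ s := fun h => by rw [h, hs] at hvu; omega
    have hut : u ≠ t := fun h => by rw [h, ht] at hvu; omega
    rw [psi, if_neg hus, if_neg hut, add_zero, add_zero]
  rw [Finset.sum_congr rfl step, Finset.sum_add_distrib,
    sum_fiber hi (fun u => vlayer u = i) (fun e => ket (Sum.inl e)),
    sum_fiber lo (fun u => vlayer u = i) (fun e => ket (Sum.inl e))]
  have e1 : (Finset.univ.filter fun e => vlayer (hi e) = i)
      = (Finset.univ.filter fun e => elayer e = i) :=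
    Finset.filter_congr fun e _ => by rw [hhi e]
  have e2 : (Finset.univ.filter fun e => vlayer (lo e) = i)
      = (Finset.univ.filter fun e => elayer e = (i + 1)) := by
    refine Finset.filter_congr fun e _ => ?_
    rw [hlo e]
    have := (hel e).1
    omega
  have hexp : psibar n elayer W0 Wn1 i =
      (Real.sqrt (Wt n elayer W0 Wn1 i) : ℂ) • Lket n elayer W0 Wn1 i
      + (Real.sqrt (Wt n elayer W0 Wn1 (i + 1)) : ℂ) • Lket n elayer W0 Wn1 (i + 1) := rfl
  rw [e1, e2, hexp, sqrt_smul_Lket n elayer W0 Wn1 i (by omega) (by omega),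
    sqrt_smul_Lket n elayer W0 Wn1 (i + 1) (by omega) (by omega)]

end Graph

lemma psi_inner_prop
    (n : ℕ) (vlayer : V → ℕ) (elayer : E → ℕ) (lo hi : E → V) (s t : V) (W0 Wn1 : ℝ)
    (h0 : 0 < W0) (h1 : 0 < Wn1)
    (hel : ∀ e, 1 ≤ elayer e ∧ elayer e ≤ n)
    (hlo : ∀ e, vlayer (lo e) = elayer e - 1)
    (hhi : ∀ e, vlayer (hi e) = elayer e)
    (hs : vlayer s = 0) (ht : vlayer t = n)
    (dplus dminus : ℕ → ℕ)
    (hdp : ∀ u, vlayer u < n →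
        (Finset.univ.filter fun e => lo e = u).card = dplus (vlayer u))
    (hdm : ∀ u, 1 ≤ vlayer u →
        (Finset.univ.filter fun e => hi e = u).card = dminus (vlayer u))
    (u : V) (i : ℕ) (hiu : vlayer u = i) (hi1 : 1 ≤ i) (hi2 : i < n) :
    ∃ r : ℝ, ∀ x ∈ Submodule.span ℂ (Lket n elayer (E := E) W0 Wn1 '' {i | i ≤ n + 1}),
      ⟪psi lo hi s t W0 Wn1 u, x⟫_ℂ = (r : ℂ) * ⟪psibar n elayer W0 Wn1 i, x⟫_ℂ := by
  classical
  set Si := (Finset.univ.filter fun v => vlayer v = i).card with hSidef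
  have hSine : Si ≠ 0 :=
    Finset.card_ne_zero_of_mem (Finset.mem_filter.mpr ⟨Finset.mem_univ u, hiu⟩)
  have hWi : Wt n elayer W0 Wn1 i = ((Si * dminus i : ℕ) : ℝ) := by
    rw [Wt, if_neg (by omega), if_neg (by omega)]
    norm_cast
    have hflt : (Finset.univ.filter fun e => elayer e = i)
        = (Finset.univ.filter fun e => vlayer (hi e) = i) :=
      Finset.filter_congr fun e _ => by rw [hhi e]
    rw [hflt, card_fiber hi (fun v => vlayer v = i),
      Finset.sum_congr rfl (fun v hv => hdm v (by
        have := (Finset.mem_filter.mp hv).2; omega))]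
    rw [Finset.sum_congr rfl (fun v hv => by
      rw [(Finset.mem_filter.mp hv).2]), Finset.sum_const, smul_eq_mul, hSidef]
  have hWi1 : Wt n elayer W0 Wn1 (i + 1) = ((Si * dplus i : ℕ) : ℝ) := by
    rw [Wt, if_neg (by omega), if_neg (by omega)]
    norm_cast
    have hflt : (Finset.univ.filter fun e => elayer e = i + 1)
        = (Finset.univ.filter fun e => vlayer (lo e) = i) := by
      refine Finset.filter_congr fun e _ => ?_
      rw [hlo e]
      have := (hel e).1
      omega
    rw [hflt, card_fiber lo (fun v => vlayer v = i),
      Finset.sum_congr rfl (fun v hv => hdp v (by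
        have := (Finset.mem_filter.mp hv).2; omega))]
    rw [Finset.sum_congr rfl (fun v hv => by
      rw [(Finset.mem_filter.mp hv).2]), Finset.sum_const, smul_eq_mul, hSidef]
  have hDi : (Finset.univ.filter fun e => hi e = u).card = dminus i := by
    rw [hdm u (by omega), hiu]
  have hUi : (Finset.univ.filter fun e => lo e = u).card = dplus i := by
    rw [hdp u (by omega), hiu]
  set r : ℝ := (Si : ℝ)⁻¹ with hrdef
  have hSiR : (Si : ℝ) ≠ 0 := Nat.cast_ne_zero.mpr hSine
  have hri : ((dminus i : ℕ) : ℝ) = r * Wt n elayer W0 Wn1 i := by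
    rw [hWi, hrdef]
    push_cast
    field_simp
  have hri1 : ((dplus i : ℕ) : ℝ) = r * Wt n elayer W0 Wn1 (i + 1) := by
    rw [hWi1, hrdef]
    push_cast
    field_simp
  have hus : u ≠ s := fun h => by rw [h, hs] at hiu; omega
  have hut : u ≠ t := fun h => by rw [h] at hiu; omega
  have hgen : ∀ j : ℕ,
      ⟪psi lo hi s t W0 Wn1 u, Lket n elayer W0 Wn1 j⟫_ℂ
        = (r : ℂ) * ⟪psibar n elayer W0 Wn1 i, Lket n elayer W0 Wn1 j⟫_ℂ := by
    intro j
    rw [psi, if_neg hus, if_neg hut, add_zero, add_zero, inner_add_left,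
      inner_sum_Lket n elayer W0 Wn1 _ i (by omega) (by omega)
        (fun e he => by rw [← hhi e, (Finset.mem_filter.mp he).2, hiu]) j,
      inner_sum_Lket n elayer W0 Wn1 _ (i + 1) (by omega) (by omega)
        (fun e he => by
          have h' := hlo e
          rw [(Finset.mem_filter.mp he).2, hiu] at h'
          have := (hel e).1
          omega) j,
      inner_psibar_Lket n elayer W0 Wn1 h0 h1 i j (by omega), hDi, hUi]
    rcases eq_or_ne j i with rfl | hji
    · rw [if_pos rfl, if_neg (by omega : ¬(j = j + 1)), add_zero, if_pos rfl,
        ← Complex.ofReal_natCast, ← Complex.ofReal_mul, ← Complex.ofReal_mul]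
      congr 1
      rw [hri, mul_assoc, mul_inv_sqrt _ (Wt_nonneg n elayer W0 Wn1 h0 h1 j)]
    · rw [if_neg hji]
      rcases eq_or_ne j (i + 1) with rfl | hji1
      · rw [if_pos rfl, zero_add, if_neg hji, if_pos rfl,
          ← Complex.ofReal_natCast, ← Complex.ofReal_mul, ← Complex.ofReal_mul]
        congr 1
        rw [hri1, mul_assoc, mul_inv_sqrt _ (Wt_nonneg n elayer W0 Wn1 h0 h1 (i + 1))]
      · rw [if_neg hji1, add_zero, if_neg hji, if_neg hji1, mul_zero]
  refine ⟨r, fun x hx => ?_⟩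
  have hw : ∀ j ∈ {i | i ≤ n + 1},
      ⟪psi lo hi s t W0 Wn1 u - (r : ℂ) • psibar n elayer W0 Wn1 i,
        Lket n elayer (E := E) W0 Wn1 j⟫_ℂ = 0 := by
    intro j _
    rw [inner_sub_left, inner_smul_left, Complex.conj_ofReal, hgen j, sub_self]
  have hzero : ⟪psi lo hi s t W0 Wn1 u - (r : ℂ) • psibar n elayer W0 Wn1 i, x⟫_ℂ = 0 := by
    induction hx using Submodule.span_induction with
    | mem y hy =>
      obtain ⟨j, hj, rfl⟩ := hy
      exact hw j hj
    | zero => simp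
    | add y z _ _ hy hz => rw [inner_add_right, hy, hz, add_zero]
    | smul c y _ hy => rw [inner_smul_right, hy, mul_zero]
  rw [inner_sub_left, inner_smul_left, Complex.conj_ofReal, sub_eq_zero] at hzero
  exact hzero

lemma master
    (n : ℕ) (vlayer : V → ℕ) (elayer : E → ℕ) (lo hi : E → V) (s t : V)
    (W0 Wn1 : ℝ) (hW0 : 0 < W0) (hWn1 : 0 < Wn1)
    (hvl : ∀ u, vlayer u ≤ n)
    (hel : ∀ e, 1 ≤ elayer e ∧ elayer e ≤ n)
    (hlo : ∀ e, vlayer (lo e) = elayer e - 1)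
    (hhi : ∀ e, vlayer (hi e) = elayer e)
    (hs : vlayer s = 0) (hsu : ∀ u, vlayer u = 0 → u = s)
    (ht : vlayer t = n) (htu : ∀ u, vlayer u = n → u = t)
    (dplus dminus : ℕ → ℕ)
    (hdp : ∀ u, vlayer u < n →
        (Finset.univ.filter fun e => lo e = u).card = dplus (vlayer u))
    (hdm : ∀ u, 1 ≤ vlayer u →
        (Finset.univ.filter fun e => hi e = u).card = dminus (vlayer u))
    (hn1 : 1 ≤ n)
    (P : ℕ → Prop) [DecidablePred P] (hP : ∀ i, P i → ¬ P (i + 1))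
    (R Rbar : EuclideanSpace ℂ (E ⊕ Bool) →ₗ[ℂ] EuclideanSpace ℂ (E ⊕ Bool))
    (hRneg : ∀ u, P (vlayer u) → R (psi lo hi s t W0 Wn1 u) = -psi lo hi s t W0 Wn1 u)
    (hRid : ∀ x, (∀ u, P (vlayer u) → (inner ℂ (psi lo hi s t W0 Wn1 u) x : ℂ) = 0) →
        R x = x)
    (hRbarneg : ∀ i, i ≤ n → P i →
        Rbar (psibar n elayer W0 Wn1 i) = -psibar n elayer W0 Wn1 i)
    (hRbarid : ∀ x, (∀ i, i ≤ n → P i → (inner ℂ (psibar n elayer W0 Wn1 i) x : ℂ) = 0) →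
        Rbar x = x) :
    ∀ x ∈ Submodule.span ℂ (Lket n elayer (E := E) W0 Wn1 '' {i | i ≤ n + 1}),
      R x = Rbar x := by
  classical
  intro x hx
  have hLmem : ∀ j, j ≤ n + 1 →
      Lket n elayer (E := E) W0 Wn1 j ∈
        Submodule.span ℂ (Lket n elayer (E := E) W0 Wn1 '' {i | i ≤ n + 1}) :=
    fun j hj => Submodule.subset_span ⟨j, hj, rfl⟩
  have hpbmem : ∀ i, i ≤ n →
      psibar n elayer (E := E) W0 Wn1 i ∈
        Submodule.span ℂ (Lket n elayer (E := E) W0 Wn1 '' {i | i ≤ n + 1}) := by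
    intro i hi
    exact Submodule.add_mem _
      (Submodule.smul_mem _ _ (hLmem i (by omega)))
      (Submodule.smul_mem _ _ (hLmem (i + 1) (by omega)))
  set I : Finset ℕ := (Finset.range (n + 1)).filter P with hIdef
  have hImem : ∀ i, i ∈ I ↔ (i ≤ n ∧ P i) := by
    intro i
    simp [hIdef, Finset.mem_filter, Finset.mem_range, Nat.lt_succ_iff]
  set c : ℕ → ℂ := fun i =>
    ⟪psibar n elayer (E := E) W0 Wn1 i, x⟫_ℂ /
      ((Wt n elayer (E := E) W0 Wn1 i + Wt n elayer (E := E) W0 Wn1 (i + 1) : ℝ) : ℂ)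
    with hcdef
  set y : EuclideanSpace ℂ (E ⊕ Bool) := ∑ i ∈ I, c i • psibar n elayer W0 Wn1 i with hydef
  have hymem : y ∈ Submodule.span ℂ (Lket n elayer (E := E) W0 Wn1 '' {i | i ≤ n + 1}) :=
    Submodule.sum_mem _ fun i hi =>
      Submodule.smul_mem _ _ (hpbmem i ((hImem i).mp hi).1)
  have hsep : ∀ i j, P i → P j → i ≠ j → j ≠ i + 1 ∧ i ≠ j + 1 := by
    intro i j hPi hPj hij
    constructor
    · rintro rfl
      exact hP i hPi hPj
    · rintro rfl
      exact hP j hPj hPi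
  have hortho : ∀ i, i ≤ n → P i → ⟪psibar n elayer (E := E) W0 Wn1 i, x - y⟫_ℂ = 0 := by
    intro i hin hPi
    have hyi : ⟪psibar n elayer (E := E) W0 Wn1 i, y⟫_ℂ
        = c i * ((Wt n elayer (E := E) W0 Wn1 i + Wt n elayer (E := E) W0 Wn1 (i + 1) : ℝ) : ℂ) := by
      rw [hydef, inner_sum, Finset.sum_eq_single i]
      · rw [inner_smul_right,
          inner_psibar_psibar n elayer W0 Wn1 hW0 hWn1 i i hin (fun h => absurd rfl h),
          if_pos rfl]
      · intro j hj hne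
        rw [inner_smul_right,
          inner_psibar_psibar n elayer W0 Wn1 hW0 hWn1 i j hin
            (fun _ => hsep i j hPi ((hImem j).mp hj).2 (fun h => hne h.symm)),
          if_neg (fun h => hne h.symm), mul_zero]
      · intro hni
        exact absurd ((hImem i).mpr ⟨hin, hPi⟩) hni
    rw [inner_sub_right, hyi]
    by_cases hw : (Wt n elayer (E := E) W0 Wn1 i + Wt n elayer (E := E) W0 Wn1 (i + 1) : ℝ) = 0
    · have hw1 : Wt n elayer (E := E) W0 Wn1 i = 0 ∧ Wt n elayer (E := E) W0 Wn1 (i + 1) = 0 := by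
        constructor <;> nlinarith [Wt_nonneg n elayer W0 Wn1 hW0 hWn1 i,
          Wt_nonneg n elayer W0 Wn1 hW0 hWn1 (i + 1)]
      have hpz : psibar n elayer (E := E) W0 Wn1 i = 0 := by
        have hexp : psibar n elayer (E := E) W0 Wn1 i =
            (Real.sqrt (Wt n elayer W0 Wn1 i) : ℂ) • Lket n elayer W0 Wn1 i
            + (Real.sqrt (Wt n elayer W0 Wn1 (i + 1)) : ℂ) • Lket n elayer W0 Wn1 (i + 1) := rfl
        rw [hexp, hw1.1, hw1.2]
        simp
      rw [hpz]
      simp [hw1.1, hw1.2]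
    · rw [hcdef]
      rw [div_mul_cancel₀ _ (Complex.ofReal_ne_zero.mpr hw), sub_self]
  have hzmem : x - y ∈ Submodule.span ℂ (Lket n elayer (E := E) W0 Wn1 '' {i | i ≤ n + 1}) :=
    Submodule.sub_mem _ hx hymem
  -- Rbar side
  have hRbary : Rbar y = -y := by
    rw [hydef, map_sum, ← Finset.sum_neg_distrib]
    refine Finset.sum_congr rfl fun i hi => ?_
    rw [map_smul, hRbarneg i ((hImem i).mp hi).1 ((hImem i).mp hi).2, smul_neg]
  have hRbarz : Rbar (x - y) = x - y := hRbarid _ (fun i hin hPi => hortho i hin hPi)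
  -- R side
  have hRpb : ∀ i, i ≤ n → P i →
      R (psibar n elayer (E := E) W0 Wn1 i) = -psibar n elayer W0 Wn1 i := by
    intro i hin hPi
    rcases eq_or_ne i 0 with rfl | hi0
    · rw [← psi_s_eq n vlayer elayer lo hi s t W0 Wn1 hn1 hel hlo hhi hs hsu ht]
      rw [hRneg s (by rw [hs]; exact hPi)]
    · rcases eq_or_ne n i with rfl | hinn
      · rw [← psi_t_eq n vlayer elayer lo hi s t W0 Wn1 hn1 hel hlo hhi hs ht htu]
        rw [hRneg t (by rw [ht]; exact hPi)]
      · have hinn' : i ≠ n := fun h => hinn h.symm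
        rw [psibar_eq_sum n vlayer elayer lo hi s t W0 Wn1 hel hlo hhi hs ht i (by omega)
          (by omega), map_sum, ← Finset.sum_neg_distrib]
        refine Finset.sum_congr rfl fun u hu => ?_
        exact hRneg u (by rw [(Finset.mem_filter.mp hu).2]; exact hPi)

  have hRy : R y = -y := by
    rw [hydef, map_sum, ← Finset.sum_neg_distrib]
    refine Finset.sum_congr rfl fun i hi => ?_
    rw [map_smul, hRpb i ((hImem i).mp hi).1 ((hImem i).mp hi).2, smul_neg]
  have hRz : R (x - y) = x - y := by
    apply hRid
    intro u hPu
    rcases eq_or_ne (vlayer u) 0 with hv0 | hv0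
    · rw [hsu u hv0,
        psi_s_eq n vlayer elayer lo hi s t W0 Wn1 hn1 hel hlo hhi hs hsu ht]
      exact hortho 0 (by omega) (by rw [← hv0]; exact hPu)
    · rcases eq_or_ne (vlayer u) n with hvn | hvn
      · rw [htu u hvn,
          psi_t_eq n vlayer elayer lo hi s t W0 Wn1 hn1 hel hlo hhi hs ht htu]
        exact hortho n le_rfl (by rw [← hvn]; exact hPu)
      · obtain ⟨r, hr⟩ := psi_inner_prop n vlayer elayer lo hi s t W0 Wn1 hW0 hWn1
          hel hlo hhi hs ht dplus dminus hdp hdm u (vlayer u) rfl (by omega)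
          (lt_of_le_of_ne (hvl u) hvn)
        rw [hr (x - y) hzmem, hortho (vlayer u) (hvl u) hPu, mul_zero]
  have hxsplit : x = (x - y) + y := by abel
  rw [hxsplit, map_add, map_add, hRy, hRz, hRbary, hRbarz]

theorem hierarchical_flattening
    (n : ℕ) (vlayer : V → ℕ) (elayer : E → ℕ) (lo hi : E → V) (s t : V)
    (W0 Wn1 : ℝ) (hW0 : 0 < W0) (hWn1 : 0 < Wn1)
    (hvl : ∀ u, vlayer u ≤ n)
    (hel : ∀ e, 1 ≤ elayer e ∧ elayer e ≤ n)
    (hlo : ∀ e, vlayer (lo e) = elayer e - 1)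
    (hhi : ∀ e, vlayer (hi e) = elayer e)
    (hs : vlayer s = 0) (hsu : ∀ u, vlayer u = 0 → u = s)
    (ht : vlayer t = n) (htu : ∀ u, vlayer u = n → u = t)
    (dplus dminus : ℕ → ℕ)
    (hdp : ∀ u, vlayer u < n →
        (Finset.univ.filter fun e => lo e = u).card = dplus (vlayer u))
    (hdm : ∀ u, 1 ≤ vlayer u →
        (Finset.univ.filter fun e => hi e = u).card = dminus (vlayer u))
    (hn : Odd n)
    (RA RB RAbar RBbar : EuclideanSpace ℂ (E ⊕ Bool) →ₗ[ℂ] EuclideanSpace ℂ (E ⊕ Bool))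
    (hRAneg : ∀ u, Even (vlayer u) → RA (psi lo hi s t W0 Wn1 u) = -psi lo hi s t W0 Wn1 u)
    (hRAid : ∀ x, (∀ u, Even (vlayer u) → (inner ℂ (psi lo hi s t W0 Wn1 u) x : ℂ) = 0) →
        RA x = x)
    (hRBneg : ∀ u, Odd (vlayer u) → RB (psi lo hi s t W0 Wn1 u) = -psi lo hi s t W0 Wn1 u)
    (hRBid : ∀ x, (∀ u, Odd (vlayer u) → (inner ℂ (psi lo hi s t W0 Wn1 u) x : ℂ) = 0) →
        RB x = x)
    (hRAbarneg : ∀ i, i ≤ n → Even i →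
        RAbar (psibar n elayer W0 Wn1 i) = -psibar n elayer W0 Wn1 i)
    (hRAbarid : ∀ x, (∀ i, i ≤ n → Even i → (inner ℂ (psibar n elayer W0 Wn1 i) x : ℂ) = 0) →
        RAbar x = x)
    (hRBbarneg : ∀ i, i ≤ n → Odd i →
        RBbar (psibar n elayer W0 Wn1 i) = -psibar n elayer W0 Wn1 i)
    (hRBbarid : ∀ x, (∀ i, i ≤ n → Odd i → (inner ℂ (psibar n elayer W0 Wn1 i) x : ℂ) = 0) →
        RBbar x = x) :
    ∀ x ∈ Submodule.span ℂ (Lket n elayer W0 Wn1 '' {i | i ≤ n + 1}),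
      RA x = RAbar x ∧ RB x = RBbar x := by
  intro x hx
  constructor
  · exact master n vlayer elayer lo hi s t W0 Wn1 hW0 hWn1 hvl hel hlo hhi hs hsu ht htu
      dplus dminus hdp hdm hn.pos Even
      (fun i h => by rw [Nat.even_add_one]; exact not_not_intro h)
      RA RAbar hRAneg hRAid hRAbarneg hRAbarid x hx
  · exact master n vlayer elayer lo hi s t W0 Wn1 hW0 hWn1 hvl hel hlo hhi hs hsu ht htu
      dplus dminus hdp hdm hn.pos Odd
      (fun i h => by rw [Nat.odd_add_one]; exact not_not_intro h)
      RB RBbar hRBneg hRBid hRBbarneg hRBbarid x hx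

end Stmt14
end
end

section
/- In the flattened line-graph setting with odd n, weights W_0, …, W_{n+1} > 0 and C_{n+1} = 1, let v₂ = Σ_{k=1}^{n} (−1)^⌊k/2⌋ √(C_k) |L_k⟩ and σ = (−1)^{(n+1)/2}. Then |L_0⟩ + v₂ lies in the span of {ψ_i : i even, 0 ≤ i ≤ n−1}, and v₂ + σ|L_{n+1}⟩ is orthogonal to ψ_i for every odd i with 1 ≤ i ≤ n. Consequently R_Ā(|L_0⟩ + v₂ − σ|L_{n+1}⟩) = −|L_0⟩ − v₂ − σ|L_{n+1}⟩, and R_B̄ fixes −|L_0⟩ − v₂ − σ|L_{n+1}⟩. -/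
/-!
**Statement 15.**
In the flattened line-graph setting with odd `n`, weights `W_0, …, W_{n+1} > 0` and
`C_{n+1} = 1`, let `v₂ = ∑_{k=1}^{n} (−1)^⌊k/2⌋ √(C_k) |L_k⟩` and `σ = (−1)^{(n+1)/2}`.
Then `|L_0⟩ + v₂` lies in the span of `{ψ_i : i even, 0 ≤ i ≤ n−1}`, and `v₂ + σ|L_{n+1}⟩`
is orthogonal to `ψ_i` for every odd `i ≤ n`.  Consequently
`R_Ā (|L_0⟩ + v₂ − σ|L_{n+1}⟩) = −|L_0⟩ − v₂ − σ|L_{n+1}⟩` and `R_B̄` fixes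
`−|L_0⟩ − v₂ − σ|L_{n+1}⟩`.

The walk space `ℂ^{n+2}` is `EuclideanSpace ℂ (Fin (n+2))`, with `|L_i⟩ = ket n i` for
`0 ≤ i ≤ n+1`; `ψ_i = √(W_i)|L_i⟩ + √(W_{i+1})|L_{i+1}⟩`;
`C_k = ∏_{i=1}^{k} (W_{i−1}/W_i)^{(−1)^i}`; `⌊k/2⌋ = k/2` and `⌈k/2⌉ = (k+1)/2` in
natural-number division.  `R_Ā` is the unitary acting as `−1` on `span{ψ_i : i ≤ n even}`
and as the identity on its orthogonal complement, specified by these defining properties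
(similarly `R_B̄` for odd `i`).
-/

noncomputable section

namespace Stmt15

/-- `|L_i⟩`, the `i`-th basis vector of the flattened walk space. -/
def ket (n : ℕ) (i : ℕ) : EuclideanSpace ℂ (Fin (n + 2)) :=
  if h : i < n + 2 then EuclideanSpace.single ⟨i, h⟩ 1 else 0

/-- The flattened star state `ψ_i = √(W i) |L_i⟩ + √(W (i+1)) |L_{i+1}⟩`. -/
def psi (n : ℕ) (W : ℕ → ℝ) (i : ℕ) : EuclideanSpace ℂ (Fin (n + 2)) :=
  (Real.sqrt (W i) : ℂ) • ket n i + (Real.sqrt (W (i + 1)) : ℂ) • ket n (i + 1)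

/-- `C_k = ∏_{i=1}^{k} (W_{i−1}/W_i)^{(−1)^i}`. -/
def C (W : ℕ → ℝ) (k : ℕ) : ℝ :=
  ∏ i ∈ Finset.Icc 1 k, (W (i - 1) / W i) ^ ((-1 : ℤ) ^ i)

/-- `v₂ = ∑_{k=1}^{n} (−1)^⌊k/2⌋ √(C_k) |L_k⟩`. -/
def v₂ (n : ℕ) (W : ℕ → ℝ) : EuclideanSpace ℂ (Fin (n + 2)) :=
  ∑ k ∈ Finset.Icc 1 n, (((-1 : ℂ) ^ (k / 2) * (Real.sqrt (C W k) : ℂ)) • ket n k)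

/-! ### Auxiliary lemmas -/

/-- The coefficient `a_k = (−1)^⌊k/2⌋ √(C_k)`. -/
def coefA (W : ℕ → ℝ) (k : ℕ) : ℂ :=
  (-1 : ℂ) ^ (k / 2) * (Real.sqrt (C W k) : ℂ)

lemma C_zero (W : ℕ → ℝ) : C W 0 = 1 := by simp [C]

lemma C_succ (W : ℕ → ℝ) (k : ℕ) :
    C W (k + 1) = C W k * (W k / W (k + 1)) ^ ((-1 : ℤ) ^ (k + 1)) := by
  unfold C
  rw [Finset.prod_Icc_succ_top (Nat.le_add_left 1 k)]
  simp

lemma C_pos (W : ℕ → ℝ) (k : ℕ) (hW : ∀ i, i ≤ k → 0 < W i) : 0 < C W k := by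
  apply Finset.prod_pos
  intro i hi
  simp only [Finset.mem_Icc] at hi
  exact zpow_pos (div_pos (hW _ (le_trans (Nat.sub_le _ _) hi.2)) (hW _ hi.2)) _

/-- Splitting a `range (N+1)` sum into the `0` term and the `Icc 1 N` part. -/
lemma sum_range_succ_split {V : Type*} [AddCommMonoid V] (N : ℕ) (g : ℕ → V) :
    ∑ k ∈ Finset.range (N + 1), g k = g 0 + ∑ k ∈ Finset.Icc 1 N, g k := by
  induction N with
  | zero => simp
  | succ N ih =>
      rw [Finset.sum_range_succ, ih, Finset.sum_Icc_succ_top (by omega), add_assoc]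

/-- Pairing up a sum over `range (2*M)`. -/
lemma sum_range_two_mul {V : Type*} [AddCommMonoid V] (M : ℕ) (f : ℕ → V) :
    ∑ k ∈ Finset.range (2 * M), f k
      = ∑ m ∈ Finset.range M, (f (2 * m) + f (2 * m + 1)) := by
  induction M with
  | zero => simp
  | succ M ih =>
      have h2 : 2 * (M + 1) = (2 * M + 1) + 1 := by omega
      rw [h2, Finset.sum_range_succ, Finset.sum_range_succ, Finset.sum_range_succ, ih,
        add_assoc]

/-- Even step relation: `a_{2m+1} √W_{2m} = a_{2m} √W_{2m+1}`. -/
lemma key_even (W : ℕ → ℝ) (m : ℕ) (h1 : 0 < W (2 * m)) (h2 : 0 < W (2 * m + 1))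
    (hCpos : 0 < C W (2 * m)) :
    coefA W (2 * m + 1) * (Real.sqrt (W (2 * m)) : ℂ)
      = coefA W (2 * m) * (Real.sqrt (W (2 * m + 1)) : ℂ) := by
  have hCsucc : C W (2 * m + 1) = C W (2 * m) * (W (2 * m + 1) / W (2 * m)) := by
    rw [C_succ, Odd.neg_one_pow ⟨m, by omega⟩, zpow_neg_one, inv_div]
  have hC1 : 0 < C W (2 * m + 1) := by
    rw [hCsucc]; positivity
  have hprod : C W (2 * m + 1) * W (2 * m) = C W (2 * m) * W (2 * m + 1) := by
    rw [hCsucc]; field_simp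
  have hreal : Real.sqrt (C W (2 * m + 1)) * Real.sqrt (W (2 * m))
      = Real.sqrt (C W (2 * m)) * Real.sqrt (W (2 * m + 1)) := by
    rw [← Real.sqrt_mul hC1.le, ← Real.sqrt_mul hCpos.le, hprod]
  have hc : ((Real.sqrt (C W (2 * m + 1)) : ℂ)) * (Real.sqrt (W (2 * m)) : ℂ)
      = (Real.sqrt (C W (2 * m)) : ℂ) * (Real.sqrt (W (2 * m + 1)) : ℂ) := by
    exact_mod_cast congrArg (fun x : ℝ => (x : ℂ)) hreal
  have e1 : (2 * m + 1) / 2 = m := by omega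
  have e2 : (2 * m) / 2 = m := by omega
  unfold coefA
  rw [e1, e2]
  linear_combination ((-1 : ℂ) ^ m) * hc

/-- Odd step relation: `a_i √W_i + a_{i+1} √W_{i+1} = 0` for odd `i`. -/
lemma key_odd (W : ℕ → ℝ) (i : ℕ) (hodd : Odd i) (h1 : 0 < W i) (h2 : 0 < W (i + 1))
    (hCpos : 0 < C W i) :
    coefA W i * (Real.sqrt (W i) : ℂ) + coefA W (i + 1) * (Real.sqrt (W (i + 1)) : ℂ) = 0 := by
  obtain ⟨s, hs⟩ := hodd
  have hCsucc : C W (i + 1) = C W i * (W i / W (i + 1)) := by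
    rw [C_succ, Even.neg_one_pow ⟨s + 1, by omega⟩, zpow_one]
  have hC1 : 0 < C W (i + 1) := by
    rw [hCsucc]; positivity
  have hprod : C W (i + 1) * W (i + 1) = C W i * W i := by
    rw [hCsucc]; field_simp
  have hreal : Real.sqrt (C W (i + 1)) * Real.sqrt (W (i + 1))
      = Real.sqrt (C W i) * Real.sqrt (W i) := by
    rw [← Real.sqrt_mul hC1.le, ← Real.sqrt_mul hCpos.le, hprod]
  have hc : (Real.sqrt (C W (i + 1)) : ℂ) * (Real.sqrt (W (i + 1)) : ℂ)
      = (Real.sqrt (C W i) : ℂ) * (Real.sqrt (W i) : ℂ) := by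
    exact_mod_cast congrArg (fun x : ℝ => (x : ℂ)) hreal
  have e1 : i / 2 = s := by omega
  have e2 : (i + 1) / 2 = s + 1 := by omega
  unfold coefA
  rw [e1, e2]
  linear_combination (-(-1 : ℂ) ^ s) * hc

lemma inner_ket_ket (n i j : ℕ) (hi : i < n + 2) (hj : j < n + 2) :
    (inner ℂ (ket n i) (ket n j) : ℂ) = if i = j then 1 else 0 := by
  rw [ket, ket, dif_pos hi, dif_pos hj, EuclideanSpace.inner_single_left]
  simp [EuclideanSpace.single_apply, Fin.ext_iff, eq_comm]

lemma inner_psi_ket (n : ℕ) (W : ℕ → ℝ) (i k : ℕ) (hi : i + 1 < n + 2) (hk : k < n + 2) :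
    (inner ℂ (psi n W i) (ket n k) : ℂ) =
      (if i = k then (Real.sqrt (W i) : ℂ) else 0)
        + (if i + 1 = k then (Real.sqrt (W (i + 1)) : ℂ) else 0) := by
  rw [psi, inner_add_left, inner_smul_left, inner_smul_left,
    inner_ket_ket n i k (by omega) hk, inner_ket_ket n (i + 1) k hi hk]
  simp [Complex.conj_ofReal, mul_ite]

theorem flattened_v2_reflections
    (n : ℕ) (hn : Odd n) (W : ℕ → ℝ) (hW : ∀ i ≤ n + 1, 0 < W i)
    (hC : C W (n + 1) = 1)
    (RA RB : EuclideanSpace ℂ (Fin (n + 2)) →ₗ[ℂ] EuclideanSpace ℂ (Fin (n + 2)))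
    (hRAneg : ∀ i, i ≤ n → Even i → RA (psi n W i) = -psi n W i)
    (hRAid : ∀ x, (∀ i, i ≤ n → Even i → (inner ℂ (psi n W i) x : ℂ) = 0) → RA x = x)
    (hRBneg : ∀ i, i ≤ n → Odd i → RB (psi n W i) = -psi n W i)
    (hRBid : ∀ x, (∀ i, i ≤ n → Odd i → (inner ℂ (psi n W i) x : ℂ) = 0) → RB x = x) :
    (ket n 0 + v₂ n W) ∈ Submodule.span ℂ (psi n W '' {i | i ≤ n - 1 ∧ Even i}) ∧
    (∀ i, i ≤ n → Odd i →
      (inner ℂ (psi n W i) (v₂ n W + ((-1 : ℂ) ^ ((n + 1) / 2)) • ket n (n + 1)) : ℂ) = 0) ∧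
    RA (ket n 0 + v₂ n W - ((-1 : ℂ) ^ ((n + 1) / 2)) • ket n (n + 1))
      = -ket n 0 - v₂ n W - ((-1 : ℂ) ^ ((n + 1) / 2)) • ket n (n + 1) ∧
    RB (-ket n 0 - v₂ n W - ((-1 : ℂ) ^ ((n + 1) / 2)) • ket n (n + 1))
      = -ket n 0 - v₂ n W - ((-1 : ℂ) ^ ((n + 1) / 2)) • ket n (n + 1) := by
  obtain ⟨t, ht⟩ := hn
  set σc : ℂ := (-1 : ℂ) ^ ((n + 1) / 2) with hσc
  have hCpos : ∀ k, k ≤ n + 1 → 0 < C W k :=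
    fun k hk => C_pos W k (fun i hi => hW i (le_trans hi hk))
  -- coefficient at 0 is 1
  have hA0 : coefA W 0 = 1 := by simp [coefA, C_zero]
  -- Part 1 : span membership
  have hsum0 : ket n 0 + v₂ n W = ∑ k ∈ Finset.range (n + 1), coefA W k • ket n k := by
    rw [sum_range_succ_split n (fun k => coefA W k • ket n k), hA0, one_smul, v₂]
    simp only [coefA]
  have h2t : n + 1 = 2 * (t + 1) := by omega
  have hsum1 : ket n 0 + v₂ n W
      = ∑ m ∈ Finset.range (t + 1),
          (coefA W (2 * m) • ket n (2 * m) + coefA W (2 * m + 1) • ket n (2 * m + 1)) := by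
    rw [hsum0, h2t, sum_range_two_mul]
  have hsum2 : ket n 0 + v₂ n W
      = ∑ m ∈ Finset.range (t + 1),
          (coefA W (2 * m) / (Real.sqrt (W (2 * m)) : ℂ)) • psi n W (2 * m) := by
    rw [hsum1]
    apply Finset.sum_congr rfl
    intro m hm
    simp only [Finset.mem_range] at hm
    have h1 : 0 < W (2 * m) := hW _ (by omega)
    have h2 : 0 < W (2 * m + 1) := hW _ (by omega)
    have hkey := key_even W m h1 h2 (hCpos _ (by omega))
    have hs : (Real.sqrt (W (2 * m)) : ℂ) ≠ 0 :=
      Complex.ofReal_ne_zero.mpr (Real.sqrt_pos.mpr h1).ne'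
    rw [psi, smul_add, smul_smul, smul_smul]
    congr 1
    · congr 1; field_simp
    · congr 1; field_simp; linear_combination hkey
  have part1 : (ket n 0 + v₂ n W)
      ∈ Submodule.span ℂ (psi n W '' {i | i ≤ n - 1 ∧ Even i}) := by
    rw [hsum2]
    apply Submodule.sum_mem
    intro m hm
    simp only [Finset.mem_range] at hm
    exact Submodule.smul_mem _ _
      (Submodule.subset_span ⟨2 * m, ⟨by omega, even_two_mul m⟩, rfl⟩)
  -- Part 2 : orthogonality
  have part2 : ∀ i, i ≤ n → Odd i →
      (inner ℂ (psi n W i) (v₂ n W + σc • ket n (n + 1)) : ℂ) = 0 := by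
    intro i hi hodd
    have hkey := key_odd W i hodd (hW i (by omega)) (hW (i + 1) (by omega)) (hCpos i (by omega))
    obtain ⟨s, hs⟩ := hodd
    rw [inner_add_right, inner_smul_right, v₂, inner_sum]
    have hsum : ∀ k ∈ Finset.Icc 1 n,
        (inner ℂ (psi n W i) ((((-1 : ℂ) ^ (k / 2) * (Real.sqrt (C W k) : ℂ)) • ket n k)) : ℂ)
          = (if k = i then coefA W i * (Real.sqrt (W i) : ℂ) else 0)
            + (if k = i + 1 then coefA W (i + 1) * (Real.sqrt (W (i + 1)) : ℂ) else 0) := by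
      intro k hk
      simp only [Finset.mem_Icc] at hk
      rw [inner_smul_right, inner_psi_ket n W i k (by omega) (by omega), mul_add]
      congr 1
      · by_cases h : k = i
        · subst h; simp [coefA]
        · rw [if_neg (fun hh => h hh.symm), if_neg h, mul_zero]
      · by_cases h : k = i + 1
        · subst h; simp [coefA]
        · rw [if_neg (fun hh => h hh.symm), if_neg h, mul_zero]
    rw [Finset.sum_congr rfl hsum, Finset.sum_add_distrib,
      Finset.sum_ite_eq' (Finset.Icc 1 n), Finset.sum_ite_eq' (Finset.Icc 1 n),
      inner_psi_ket n W i (n + 1) (by omega) (by omega)]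
    have m1 : i ∈ Finset.Icc 1 n := Finset.mem_Icc.mpr ⟨by omega, hi⟩
    have e1 : i ≠ n + 1 := by omega
    rcases Nat.lt_or_ge i n with hlt | hge
    · have m2 : i + 1 ∈ Finset.Icc 1 n := Finset.mem_Icc.mpr ⟨by omega, by omega⟩
      have e2 : i + 1 ≠ n + 1 := by omega
      simp only [if_pos m1, if_pos m2, if_neg e1, if_neg e2]
      linear_combination hkey
    · have hin : i = n := le_antisymm hi hge
      subst hin
      have m2 : i + 1 ∉ Finset.Icc 1 i := by
        simp only [Finset.mem_Icc, not_and, not_le]; omega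
      have hσ : σc = coefA W (i + 1) := by
        rw [hσc, coefA, hC, Real.sqrt_one, Complex.ofReal_one, mul_one]
      simp only [if_pos m1, if_neg m2, if_neg e1, if_pos (rfl : i + 1 = i + 1), if_true, hσ]
      linear_combination hkey
  -- RA fixes σc • ket (n+1)
  have hfixA : RA (σc • ket n (n + 1)) = σc • ket n (n + 1) := by
    apply hRAid
    intro i hi hev
    obtain ⟨c, hc⟩ := hev
    rw [inner_smul_right, inner_psi_ket n W i (n + 1) (by omega) (by omega),
      if_neg (by omega : i ≠ n + 1), if_neg (by omega : i + 1 ≠ n + 1)]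
    ring
  -- RA negates everything in the span
  have hspan : ∀ y ∈ Submodule.span ℂ (psi n W '' {i | i ≤ n - 1 ∧ Even i}), RA y = -y := by
    intro y hy
    induction hy using Submodule.span_induction with
    | mem x hx =>
        obtain ⟨i, ⟨hile, heven⟩, rfl⟩ := hx
        exact hRAneg i (by omega) heven
    | zero => simp
    | add x y _ _ hx hy => rw [map_add, hx, hy, neg_add]
    | smul c x _ hx => rw [map_smul, hx, smul_neg]
  refine ⟨part1, part2, ?_, ?_⟩
  · rw [map_sub, hspan _ part1, hfixA]
    abel
  · apply hRBid
    intro i hi hodd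
    obtain ⟨s, hs⟩ := hodd
    have h0 : (inner ℂ (psi n W i) (ket n 0) : ℂ) = 0 := by
      rw [inner_psi_ket n W i 0 (by omega) (by omega),
        if_neg (by omega : i ≠ 0), if_neg (by omega : i + 1 ≠ 0)]
      ring
    have hre : (-ket n 0 - v₂ n W - σc • ket n (n + 1))
        = -(ket n 0) + -(v₂ n W + σc • ket n (n + 1)) := by
      module
    rw [hre, inner_add_right, inner_neg_right, inner_neg_right, h0,
      part2 i hi ⟨s, hs⟩]
    ring

end Stmt15
end
end

section
/- In the flattened line-graph setting with odd n, weights W_0, …, W_{n+1} > 0 and C_{n+1} = 1, let v₃ = Σ_{k=1}^{n} (−1)^⌈k/2⌉ (1/√(C_k)) |L_k⟩ and σ = (−1)^{(n+1)/2}. Then |L_0⟩ + v₃ is orthogonal to ψ_i for every even i with 0 ≤ i ≤ n−1, and v₃ + σ|L_{n+1}⟩ lies in the span of {ψ_i : i odd, 1 ≤ i ≤ n}. Consequently R_Ā fixes |L_0⟩ + v₃ + σ|L_{n+1}⟩, and R_B̄(|L_0⟩ + v₃ + σ|L_{n+1}⟩) = |L_0⟩ − v₃ − σ|L_{n+1}⟩.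 -/
/-!
**Statement 16.**
In the flattened line-graph setting with odd `n`, weights `W_0, …, W_{n+1} > 0` and
`C_{n+1} = 1`, let `v₃ = ∑_{k=1}^{n} (−1)^⌈k/2⌉ (1/√(C_k)) |L_k⟩` and `σ = (−1)^{(n+1)/2}`.
Then `|L_0⟩ + v₃` is orthogonal to `ψ_i` for every even `i ≤ n−1`, and `v₃ + σ|L_{n+1}⟩`
lies in the span of `{ψ_i : i odd, 1 ≤ i ≤ n}`.  Consequently `R_Ā` fixes
`|L_0⟩ + v₃ + σ|L_{n+1}⟩`, and `R_B̄ (|L_0⟩ + v₃ + σ|L_{n+1}⟩) = |L_0⟩ − v₃ − σ|L_{n+1}⟩`.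

The walk space `ℂ^{n+2}` is `EuclideanSpace ℂ (Fin (n+2))`, with `|L_i⟩ = ket n i` for
`0 ≤ i ≤ n+1`; `ψ_i = √(W_i)|L_i⟩ + √(W_{i+1})|L_{i+1}⟩`;
`C_k = ∏_{i=1}^{k} (W_{i−1}/W_i)^{(−1)^i}`; `⌊k/2⌋ = k/2` and `⌈k/2⌉ = (k+1)/2` in
natural-number division.  `R_Ā` is the unitary acting as `−1` on `span{ψ_i : i ≤ n even}`
and as the identity on its orthogonal complement, specified by these defining properties
(similarly `R_B̄` for odd `i`).
-/

noncomputable section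

namespace Stmt16

def ket (n : ℕ) (i : ℕ) : EuclideanSpace ℂ (Fin (n + 2)) :=
  if h : i < n + 2 then EuclideanSpace.single ⟨i, h⟩ 1 else 0

def psi (n : ℕ) (W : ℕ → ℝ) (i : ℕ) : EuclideanSpace ℂ (Fin (n + 2)) :=
  (Real.sqrt (W i) : ℂ) • ket n i + (Real.sqrt (W (i + 1)) : ℂ) • ket n (i + 1)

def C (W : ℕ → ℝ) (k : ℕ) : ℝ :=
  ∏ i ∈ Finset.Icc 1 k, (W (i - 1) / W i) ^ ((-1 : ℤ) ^ i)

/-- `v₃ = ∑_{k=1}^{n} (−1)^⌈k/2⌉ (1/√(C_k)) |L_k⟩`. -/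
def v₃ (n : ℕ) (W : ℕ → ℝ) : EuclideanSpace ℂ (Fin (n + 2)) :=
  ∑ k ∈ Finset.Icc 1 n, (((-1 : ℂ) ^ ((k + 1) / 2) * ((Real.sqrt (C W k))⁻¹ : ℂ)) • ket n k)

/-! ### Auxiliary lemmas -/

/-- coefficient of `v₃` at index `k` (also sensible at `k = 0` and `k = n+1`). -/
def coef (W : ℕ → ℝ) (k : ℕ) : ℂ :=
  (-1 : ℂ) ^ ((k + 1) / 2) * ((Real.sqrt (C W k))⁻¹ : ℂ)

lemma v₃_eq (n : ℕ) (W : ℕ → ℝ) :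
    v₃ n W = ∑ k ∈ Finset.Icc 1 n, coef W k • ket n k := rfl

lemma inner_ket_ket (n i j : ℕ) (hi : i < n + 2) (hj : j < n + 2) :
    (inner ℂ (ket n i) (ket n j) : ℂ) = if i = j then 1 else 0 := by
  rw [ket, ket, dif_pos hi, dif_pos hj, EuclideanSpace.inner_single_left]
  simp [EuclideanSpace.single_apply, Fin.ext_iff, eq_comm]

lemma inner_psi_ket (n : ℕ) (W : ℕ → ℝ) (i j : ℕ) (hi : i + 1 < n + 2) (hj : j < n + 2) :
    (inner ℂ (psi n W i) (ket n j) : ℂ)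
      = (if i = j then ((Real.sqrt (W i) : ℝ) : ℂ) else 0)
        + (if i + 1 = j then ((Real.sqrt (W (i + 1)) : ℝ) : ℂ) else 0) := by
  rw [psi, inner_add_left, inner_smul_left, inner_smul_left,
    inner_ket_ket n i j (by omega) hj, inner_ket_ket n (i+1) j hi hj]
  simp [Complex.conj_ofReal, mul_ite]

lemma C_succ (W : ℕ → ℝ) (k : ℕ) :
    C W (k + 1) = C W k * (W k / W (k + 1)) ^ ((-1 : ℤ) ^ (k + 1)) := by
  rw [C, C, Finset.prod_Icc_succ_top (by omega)]
  simp

lemma C_pos (W : ℕ → ℝ) (k : ℕ) (hW : ∀ i ≤ k, 0 < W i) : 0 < C W k := by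
  refine Finset.prod_pos fun i hi => ?_
  rcases Finset.mem_Icc.mp hi with ⟨h1, h2⟩
  exact zpow_pos (div_pos (hW (i-1) (by omega)) (hW i (by omega))) _

lemma C_succ_even (W : ℕ → ℝ) (k : ℕ) (hk : Even k) :
    C W (k + 1) = C W k * (W (k+1) / W k) := by
  rw [C_succ, Odd.neg_one_pow (Even.add_one hk), zpow_neg_one, inv_div]

lemma C_succ_odd (W : ℕ → ℝ) (k : ℕ) (hk : Odd k) :
    C W (k + 1) = C W k * (W k / W (k+1)) := by
  rw [C_succ, Even.neg_one_pow (Odd.add_one hk), zpow_one]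

lemma sqrt_rel_even (W : ℕ → ℝ) (k : ℕ) (hk : Even k) (h0 : 0 < W k) (h1 : 0 < W (k+1))
    (hc : 0 < C W k) :
    Real.sqrt (W (k+1)) * (Real.sqrt (C W (k+1)))⁻¹
      = Real.sqrt (W k) * (Real.sqrt (C W k))⁻¹ := by
  rw [C_succ_even W k hk, Real.sqrt_mul hc.le, Real.sqrt_div h1.le]
  have ha := Real.sqrt_pos.mpr h0
  have hb := Real.sqrt_pos.mpr h1
  have hcc := Real.sqrt_pos.mpr hc
  field_simp

lemma sqrt_rel_odd (W : ℕ → ℝ) (k : ℕ) (hk : Odd k) (h0 : 0 < W k) (h1 : 0 < W (k+1))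
    (hc : 0 < C W k) :
    Real.sqrt (W k) * (Real.sqrt (C W (k+1)))⁻¹
      = Real.sqrt (W (k+1)) * (Real.sqrt (C W k))⁻¹ := by
  rw [C_succ_odd W k hk, Real.sqrt_mul hc.le, Real.sqrt_div h0.le]
  have ha := Real.sqrt_pos.mpr h0
  have hb := Real.sqrt_pos.mpr h1
  have hcc := Real.sqrt_pos.mpr hc
  field_simp

lemma key_even (W : ℕ → ℝ) (i : ℕ) (hi : Even i) (h0 : 0 < W i) (h1 : 0 < W (i+1))
    (hc : 0 < C W i) :
    ((Real.sqrt (W i) : ℝ) : ℂ) * coef W i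
      + ((Real.sqrt (W (i+1)) : ℝ) : ℂ) * coef W (i+1) = 0 := by
  obtain ⟨m, rfl⟩ := hi
  have hrel := sqrt_rel_even W (m + m) ⟨m, rfl⟩ h0 h1 hc
  have hrelC : ((Real.sqrt (W (m+m+1)) : ℝ) : ℂ) * ((Real.sqrt (C W (m+m+1)))⁻¹ : ℝ)
      = ((Real.sqrt (W (m+m)) : ℝ) : ℂ) * ((Real.sqrt (C W (m+m)))⁻¹ : ℝ) := by
    exact_mod_cast congrArg Complex.ofReal hrel
  rw [coef, coef, show (m + m + 1) / 2 = m by omega, show (m + m + 1 + 1) / 2 = m + 1 by omega,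
    pow_succ]
  push_cast at hrelC ⊢
  linear_combination (-(-1 : ℂ) ^ m) * hrelC

lemma key_odd (W : ℕ → ℝ) (i : ℕ) (hi : Odd i) (h0 : 0 < W i) (h1 : 0 < W (i+1))
    (hc : 0 < C W i) :
    coef W (i+1) * ((Real.sqrt (W i) : ℝ) : ℂ)
      = coef W i * ((Real.sqrt (W (i+1)) : ℝ) : ℂ) := by
  obtain ⟨m, rfl⟩ := hi
  have hrel := sqrt_rel_odd W (2*m+1) ⟨m, rfl⟩ h0 h1 hc
  have hrelC : ((Real.sqrt (W (2*m+1)) : ℝ) : ℂ) * ((Real.sqrt (C W (2*m+1+1)))⁻¹ : ℝ)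
      = ((Real.sqrt (W (2*m+1+1)) : ℝ) : ℂ) * ((Real.sqrt (C W (2*m+1)))⁻¹ : ℝ) := by
    exact_mod_cast congrArg Complex.ofReal hrel
  rw [coef, coef, show (2*m + 1 + 1) / 2 = m + 1 by omega,
    show (2*m + 1 + 1 + 1) / 2 = m + 1 by omega]
  push_cast at hrelC ⊢
  linear_combination ((-1 : ℂ) ^ (m+1)) * hrelC

lemma coef_zero (W : ℕ → ℝ) : coef W 0 = 1 := by
  simp [coef, C]

lemma inner_psi_v3 (n : ℕ) (W : ℕ → ℝ) (i : ℕ) (hi : i + 1 ≤ n) :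
    (inner ℂ (psi n W i) (v₃ n W) : ℂ)
      = (if 1 ≤ i then ((Real.sqrt (W i) : ℝ) : ℂ) * coef W i else 0)
        + ((Real.sqrt (W (i+1)) : ℝ) : ℂ) * coef W (i+1) := by
  have hterm : ∀ k ∈ Finset.Icc 1 n,
      (inner ℂ (psi n W i) (coef W k • ket n k) : ℂ)
        = (if i = k then ((Real.sqrt (W i) : ℝ) : ℂ) * coef W k else 0)
          + (if i + 1 = k then ((Real.sqrt (W (i+1)) : ℝ) : ℂ) * coef W k else 0) := by
    intro k hk
    rcases Finset.mem_Icc.mp hk with ⟨hk1, hk2⟩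
    rw [inner_smul_right, inner_psi_ket n W i k (by omega) (by omega)]
    split_ifs <;> ring
  rw [v₃_eq, inner_sum, Finset.sum_congr rfl hterm, Finset.sum_add_distrib,
    Finset.sum_ite_eq, Finset.sum_ite_eq]
  have h2 : i + 1 ∈ Finset.Icc 1 n := Finset.mem_Icc.mpr ⟨by omega, hi⟩
  rw [if_pos h2]
  by_cases h1 : 1 ≤ i
  · rw [if_pos (Finset.mem_Icc.mpr ⟨h1, by omega⟩), if_pos h1]
  · rw [if_neg (by simp [Finset.mem_Icc]; omega), if_neg h1]

/-- pairing a sum over `Icc 1 (2m)` into consecutive odd/even pairs. -/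
lemma sum_pair {M : Type*} [AddCommMonoid M] (f : ℕ → M) :
    ∀ m : ℕ, ∑ k ∈ Finset.Icc 1 (2*m), f k
      = ∑ j ∈ Finset.range m, (f (2*j+1) + f (2*j+2))
  | 0 => by simp
  | (m+1) => by
    rw [show 2*(m+1) = (2*m+1)+1 by omega, Finset.sum_Icc_succ_top (by omega),
      Finset.sum_Icc_succ_top (by omega), sum_pair f m, Finset.sum_range_succ,
      show 2*m+1+1 = 2*m+2 from rfl]
    abel

theorem flattened_v3_reflections
    (n : ℕ) (hn : Odd n) (W : ℕ → ℝ) (hW : ∀ i ≤ n + 1, 0 < W i)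
    (hC : C W (n + 1) = 1)
    (RA RB : EuclideanSpace ℂ (Fin (n + 2)) →ₗ[ℂ] EuclideanSpace ℂ (Fin (n + 2)))
    (hRAneg : ∀ i, i ≤ n → Even i → RA (psi n W i) = -psi n W i)
    (hRAid : ∀ x, (∀ i, i ≤ n → Even i → (inner ℂ (psi n W i) x : ℂ) = 0) → RA x = x)
    (hRBneg : ∀ i, i ≤ n → Odd i → RB (psi n W i) = -psi n W i)
    (hRBid : ∀ x, (∀ i, i ≤ n → Odd i → (inner ℂ (psi n W i) x : ℂ) = 0) → RB x = x) :
    (∀ i, i ≤ n - 1 → Even i →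
      (inner ℂ (psi n W i) (ket n 0 + v₃ n W) : ℂ) = 0) ∧
    (v₃ n W + ((-1 : ℂ) ^ ((n + 1) / 2)) • ket n (n + 1)) ∈
      Submodule.span ℂ (psi n W '' {i | 1 ≤ i ∧ i ≤ n ∧ Odd i}) ∧
    RA (ket n 0 + v₃ n W + ((-1 : ℂ) ^ ((n + 1) / 2)) • ket n (n + 1))
      = ket n 0 + v₃ n W + ((-1 : ℂ) ^ ((n + 1) / 2)) • ket n (n + 1) ∧
    RB (ket n 0 + v₃ n W + ((-1 : ℂ) ^ ((n + 1) / 2)) • ket n (n + 1))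
      = ket n 0 - v₃ n W - ((-1 : ℂ) ^ ((n + 1) / 2)) • ket n (n + 1) := by
  obtain ⟨M, hM⟩ := hn
  have hCpos : ∀ k, k ≤ n + 1 → 0 < C W k :=
    fun k hk => C_pos W k (fun i hi => hW i (by omega))
  -- Part 1
  have part1 : ∀ i, i ≤ n - 1 → Even i →
      (inner ℂ (psi n W i) (ket n 0 + v₃ n W) : ℂ) = 0 := by
    intro i hile hieven
    have hi1 : i + 1 ≤ n := by omega
    have key := key_even W i hieven (hW i (by omega)) (hW (i+1) (by omega))
      (hCpos i (by omega))
    rw [inner_add_right, inner_psi_ket n W i 0 (by omega) (by omega),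
      inner_psi_v3 n W i hi1]
    rcases Nat.eq_zero_or_pos i with h0 | h0
    · subst h0
      rw [coef_zero] at key
      norm_num
      linear_combination key
    · rw [if_neg (by omega : ¬ i = 0), if_neg (by omega : ¬ i + 1 = 0),
        if_pos (by omega : 1 ≤ i)]
      linear_combination key
  -- the decomposition of v₃ + σ • ket (n+1) into odd-psi summands
  have hcoef_top : coef W (n + 1) = (-1 : ℂ) ^ ((n + 1) / 2) := by
    rw [coef, hC, Real.sqrt_one, show (n + 1 + 1) / 2 = (n + 1) / 2 by omega]
    simp
  have hz : v₃ n W + ((-1 : ℂ) ^ ((n + 1) / 2)) • ket n (n + 1)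
      = ∑ j ∈ Finset.range (M + 1),
          (coef W (2*j+1) * (((Real.sqrt (W (2*j+1)) : ℝ) : ℂ))⁻¹) • psi n W (2*j+1) := by
    rw [← hcoef_top, v₃_eq,
      ← Finset.sum_Icc_succ_top (show 1 ≤ n + 1 by omega) (fun k => coef W k • ket n k),
      show n + 1 = 2*(M+1) by omega, sum_pair]
    refine Finset.sum_congr rfl fun j hj => ?_
    have hjM : j ≤ M := by simpa using Nat.lt_succ_iff.mp (Finset.mem_range.mp hj)
    have hW1 : 0 < W (2*j+1) := hW _ (by omega)
    have hW2 : 0 < W (2*j+1+1) := hW _ (by omega)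
    have hs1 : ((Real.sqrt (W (2*j+1)) : ℝ) : ℂ) ≠ 0 := by
      exact_mod_cast (Real.sqrt_pos.mpr hW1).ne'
    have hko := key_odd W (2*j+1) ⟨j, rfl⟩ hW1 hW2 (hCpos _ (by omega))
    rw [psi, smul_add, smul_smul, smul_smul, show 2*j+2 = 2*j+1+1 from rfl]
    congr 1
    · congr 1
      rw [mul_assoc, inv_mul_cancel₀ hs1, mul_one]
    · congr 1
      field_simp
      linear_combination hko
  refine ⟨part1, ?_, ?_, ?_⟩
  · -- span membership
    rw [hz]
    refine Submodule.sum_mem _ fun j hj => Submodule.smul_mem _ _ (Submodule.subset_span ?_)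
    have hjM : j ≤ M := Nat.lt_succ_iff.mp (Finset.mem_range.mp hj)
    exact ⟨2*j+1, ⟨by omega, by omega, ⟨j, by ring⟩⟩, rfl⟩
  · -- RA fixes
    refine hRAid _ fun i hi hieven => ?_
    have hine : i ≠ n := by rintro rfl; have h2 := Nat.even_iff.mp hieven; omega
    have hile : i ≤ n - 1 := by omega
    rw [inner_add_right, inner_smul_right,
      inner_psi_ket n W i (n+1) (by omega) (by omega), part1 i hile hieven,
      if_neg (by omega : ¬ i = n + 1), if_neg (by omega : ¬ i + 1 = n + 1)]
    simp
  · -- RB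
    have hket0 : RB (ket n 0) = ket n 0 := by
      refine hRBid _ fun i hi hiodd => ?_
      have : i ≠ 0 := by rintro rfl; exact (Nat.not_odd_iff_even.mpr Even.zero) hiodd
      rw [inner_psi_ket n W i 0 (by omega) (by omega), if_neg this,
        if_neg (by omega : ¬ i + 1 = 0), add_zero]
    have hzneg : RB (v₃ n W + ((-1 : ℂ) ^ ((n + 1) / 2)) • ket n (n + 1))
        = -(v₃ n W + ((-1 : ℂ) ^ ((n + 1) / 2)) • ket n (n + 1)) := by
      rw [hz, map_sum]
      rw [← Finset.sum_neg_distrib]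
      refine Finset.sum_congr rfl fun j hj => ?_
      have hjM : j ≤ M := Nat.lt_succ_iff.mp (Finset.mem_range.mp hj)
      rw [map_smul, hRBneg (2*j+1) (by omega) ⟨j, rfl⟩, smul_neg]
    rw [add_assoc, map_add, hket0, hzneg]
    abel

end Stmt16
end
end

section
/- In the flattened line-graph setting with odd n, weights W_0, …, W_{n+1} > 0 and C_{n+1} = 1, let v₂ = Σ_{k=1}^{n} (−1)^⌊k/2⌋ √(C_k) |L_k⟩, v₃ = Σ_{k=1}^{n} (−1)^⌈k/2⌉ (1/√(C_k)) |L_k⟩, σ = (−1)^{(n+1)/2}, and U = R_B̄ R_Ā. Then −U(|L_0⟩ + (v₂+v₃)/2) = σ|L_{n+1}⟩ + (v₂+v₃)/2. Moreover ‖v₂‖² = Σ_{k=1}^{n} C_k and ‖v₃‖² = Σ_{k=1}^{n} 1/C_k, so the catalyst satisfies ‖(v₂+v₃)/2‖² ≤ (1/2) Σ_{k=1}^{n} (C_k + 1/C_k). -/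
/-!
**Statement 17.**
In the flattened line-graph setting with odd `n`, weights `W_0, …, W_{n+1} > 0` and
`C_{n+1} = 1`, let `v₂ = ∑_{k=1}^{n} (−1)^⌊k/2⌋ √(C_k) |L_k⟩`,
`v₃ = ∑_{k=1}^{n} (−1)^⌈k/2⌉ (1/√(C_k)) |L_k⟩`, `σ = (−1)^{(n+1)/2}`, and `U = R_B̄ R_Ā`.
Then `−U(|L_0⟩ + (v₂+v₃)/2) = σ|L_{n+1}⟩ + (v₂+v₃)/2`.  Moreover `‖v₂‖² = ∑_{k=1}^n C_k` and
`‖v₃‖² = ∑_{k=1}^n 1/C_k`, so `‖(v₂+v₃)/2‖² ≤ (1/2) ∑_{k=1}^n (C_k + 1/C_k)`.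

The walk space `ℂ^{n+2}` is `EuclideanSpace ℂ (Fin (n+2))`, with `|L_i⟩ = ket n i`;
`ψ_i = √(W_i)|L_i⟩ + √(W_{i+1})|L_{i+1}⟩`; `C_k = ∏_{i=1}^{k} (W_{i−1}/W_i)^{(−1)^i}`.
`R_Ā` is the unitary acting as `−1` on `span{ψ_i : i ≤ n even}` and as the identity on its
orthogonal complement, specified by these defining properties (similarly `R_B̄` for odd `i`).
-/

noncomputable section

namespace Stmt17

def ket (n : ℕ) (i : ℕ) : EuclideanSpace ℂ (Fin (n + 2)) :=
  if h : i < n + 2 then EuclideanSpace.single ⟨i, h⟩ 1 else 0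

def psi (n : ℕ) (W : ℕ → ℝ) (i : ℕ) : EuclideanSpace ℂ (Fin (n + 2)) :=
  (Real.sqrt (W i) : ℂ) • ket n i + (Real.sqrt (W (i + 1)) : ℂ) • ket n (i + 1)

def C (W : ℕ → ℝ) (k : ℕ) : ℝ :=
  ∏ i ∈ Finset.Icc 1 k, (W (i - 1) / W i) ^ ((-1 : ℤ) ^ i)

def v₂ (n : ℕ) (W : ℕ → ℝ) : EuclideanSpace ℂ (Fin (n + 2)) :=
  ∑ k ∈ Finset.Icc 1 n, (((-1 : ℂ) ^ (k / 2) * (Real.sqrt (C W k) : ℂ)) • ket n k)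

def v₃ (n : ℕ) (W : ℕ → ℝ) : EuclideanSpace ℂ (Fin (n + 2)) :=
  ∑ k ∈ Finset.Icc 1 n, (((-1 : ℂ) ^ ((k + 1) / 2) * ((Real.sqrt (C W k))⁻¹ : ℂ)) • ket n k)

/-! ### Auxiliary machinery -/

def vec (n : ℕ) (F : ℕ → ℝ) : EuclideanSpace ℂ (Fin (n + 2)) :=
  ∑ k ∈ Finset.range (n + 2), (F k : ℂ) • ket n k

/-- the scalar `s k = √(C k)` -/
def sS (W : ℕ → ℝ) (k : ℕ) : ℝ := Real.sqrt (C W k)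

def fF (n : ℕ) (W : ℕ → ℝ) (k : ℕ) : ℝ :=
  if k ≤ n then ((-1)^(k/2) * sS W k + (-1)^((k+1)/2) * (sS W k)⁻¹)/2 else 0

def gG (n : ℕ) (W : ℕ → ℝ) (k : ℕ) : ℝ :=
  if k ≤ n then (-1)^(k/2) * sS W k / 2 else 0

def hH (W : ℕ → ℝ) (k : ℕ) : ℝ :=
  if 1 ≤ k then (-1)^((k+1)/2) * (sS W k)⁻¹ / 2 else 0

local notation "⟪" x ", " y "⟫" => @inner ℂ _ _ x y

lemma inner_ket_ket (n i j : ℕ) (hi : i < n + 2) (hj : j < n + 2) :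
    ⟪ket n i, ket n j⟫ = if i = j then 1 else 0 := by
  rw [ket, ket, dif_pos hi, dif_pos hj, EuclideanSpace.inner_single_left,
    EuclideanSpace.single_apply]
  simp [Fin.ext_iff, eq_comm]

lemma inner_ket_vec (n : ℕ) (F : ℕ → ℝ) (i : ℕ) (hi : i < n + 2) :
    ⟪ket n i, vec n F⟫ = (F i : ℂ) := by
  rw [vec, inner_sum]
  rw [Finset.sum_eq_single i]
  · rw [inner_smul_right, inner_ket_ket n i i hi hi, if_pos rfl, mul_one]
  · intro b hb hbi
    rw [inner_smul_right, inner_ket_ket n i b hi (Finset.mem_range.mp hb),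
      if_neg (Ne.symm hbi), mul_zero]
  · intro h; exact absurd (Finset.mem_range.mpr hi) h

lemma inner_psi_vec (n : ℕ) (W : ℕ → ℝ) (F : ℕ → ℝ) (i : ℕ) (hi : i ≤ n) :
    ⟪psi n W i, vec n F⟫
      = ((Real.sqrt (W i) * F i + Real.sqrt (W (i+1)) * F (i+1) : ℝ) : ℂ) := by
  rw [psi, inner_add_left, inner_smul_left, inner_smul_left,
    inner_ket_vec n F i (by omega), inner_ket_vec n F (i+1) (by omega)]
  push_cast
  simp [Complex.conj_ofReal]

lemma vec_congr (n : ℕ) (F G : ℕ → ℝ) (h : ∀ k, k < n + 2 → F k = G k) :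
    vec n F = vec n G := by
  refine Finset.sum_congr rfl fun k hk => ?_
  rw [h k (Finset.mem_range.mp hk)]

lemma vec_sub (n : ℕ) (F G : ℕ → ℝ) : vec n F - vec n G = vec n (fun k => F k - G k) := by
  rw [vec, vec, vec, ← Finset.sum_sub_distrib]
  refine Finset.sum_congr rfl fun k hk => ?_
  push_cast
  rw [sub_smul]

lemma vec_neg (n : ℕ) (F : ℕ → ℝ) : -vec n F = vec n (fun k => -F k) := by
  rw [vec, vec, ← Finset.sum_neg_distrib]
  refine Finset.sum_congr rfl fun k hk => ?_
  push_cast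
  rw [neg_smul]

lemma sum_range_odd_split {M : Type*} [AddCommMonoid M] (N : ℕ) (F : ℕ → M) :
    ∑ k ∈ Finset.range (2*N+1), F k
      = (∑ j ∈ Finset.range (N+1), F (2*j)) + ∑ j ∈ Finset.range N, F (2*j+1) := by
  induction N with
  | zero => simp
  | succ N ih =>
      rw [show 2*(N+1)+1 = (2*N+1)+1+1 by ring, Finset.sum_range_succ, Finset.sum_range_succ, ih,
        Finset.sum_range_succ (fun j => F (2*j+1))]
      conv_rhs => rw [Finset.sum_range_succ (fun j => F (2*j)) (N+1)]
      simp only [show 2*(N+1) = 2*N+2 from by ring, show 2*N+1+1 = 2*N+2 from by ring]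
      abel

lemma vec_split (n : ℕ) (F : ℕ → ℝ) :
    vec n F = (F 0 : ℂ) • ket n 0 + (∑ k ∈ Finset.Icc 1 n, (F k : ℂ) • ket n k)
      + (F (n+1) : ℂ) • ket n (n+1) := by
  rw [vec, show Finset.range (n+2) = insert 0 (insert (n+1) (Finset.Icc 1 n)) from by
    ext x; simp only [Finset.mem_insert, Finset.mem_Icc, Finset.mem_range]; omega]
  rw [Finset.sum_insert (by simp only [Finset.mem_insert, Finset.mem_Icc]; omega),
    Finset.sum_insert (by simp only [Finset.mem_Icc]; omega)]
  abel

lemma C_zero (W : ℕ → ℝ) : C W 0 = 1 := by simp [C]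

lemma C_succ (W : ℕ → ℝ) (k : ℕ) :
    C W (k+1) = C W k * (W k / W (k+1)) ^ ((-1:ℤ)^(k+1)) := by
  rw [C, Finset.prod_Icc_succ_top (by omega : 1 ≤ k+1), ← C]
  norm_num

lemma C_pos {n : ℕ} (W : ℕ → ℝ) (hW : ∀ i ≤ n+1, 0 < W i) {k : ℕ} (hk : k ≤ n+1) :
    0 < C W k := by
  refine Finset.prod_pos fun i hi => ?_
  rw [Finset.mem_Icc] at hi
  exact zpow_pos (div_pos (hW _ (by omega)) (hW _ (by omega))) _

lemma C_step_odd {n : ℕ} (W : ℕ → ℝ) (hW : ∀ i ≤ n+1, 0 < W i) {k : ℕ}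
    (hk : k + 1 ≤ n+1) (ho : Odd (k+1)) :
    W k * C W (k+1) = W (k+1) * C W k := by
  rw [C_succ, ho.neg_one_pow, zpow_neg_one]
  have h1 : W k ≠ 0 := ne_of_gt (hW _ (by omega))
  have h2 : W (k+1) ≠ 0 := ne_of_gt (hW _ hk)
  field_simp

lemma C_step_even {n : ℕ} (W : ℕ → ℝ) (hW : ∀ i ≤ n+1, 0 < W i) {k : ℕ}
    (hk : k + 1 ≤ n+1) (he : Even (k+1)) :
    W (k+1) * C W (k+1) = W k * C W k := by
  rw [C_succ, he.neg_one_pow, zpow_one]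
  have h1 : W k ≠ 0 := ne_of_gt (hW _ (by omega))
  have h2 : W (k+1) ≠ 0 := ne_of_gt (hW _ hk)
  field_simp

set_option maxHeartbeats 2000000 in
theorem flattened_transduction
    (n : ℕ) (hn : Odd n) (W : ℕ → ℝ) (hW : ∀ i ≤ n + 1, 0 < W i)
    (hC : C W (n + 1) = 1)
    (RA RB : EuclideanSpace ℂ (Fin (n + 2)) →ₗ[ℂ] EuclideanSpace ℂ (Fin (n + 2)))
    (hRAneg : ∀ i, i ≤ n → Even i → RA (psi n W i) = -psi n W i)
    (hRAid : ∀ x, (∀ i, i ≤ n → Even i → (inner ℂ (psi n W i) x : ℂ) = 0) → RA x = x)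
    (hRBneg : ∀ i, i ≤ n → Odd i → RB (psi n W i) = -psi n W i)
    (hRBid : ∀ x, (∀ i, i ≤ n → Odd i → (inner ℂ (psi n W i) x : ℂ) = 0) → RB x = x) :
    -(RB (RA (ket n 0 + (2⁻¹ : ℂ) • (v₂ n W + v₃ n W))))
      = ((-1 : ℂ) ^ ((n + 1) / 2)) • ket n (n + 1) + (2⁻¹ : ℂ) • (v₂ n W + v₃ n W) ∧
    ‖v₂ n W‖ ^ 2 = ∑ k ∈ Finset.Icc 1 n, C W k ∧
    ‖v₃ n W‖ ^ 2 = ∑ k ∈ Finset.Icc 1 n, 1 / C W k ∧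
    ‖(2⁻¹ : ℂ) • (v₂ n W + v₃ n W)‖ ^ 2
      ≤ (1 / 2) * ∑ k ∈ Finset.Icc 1 n, (C W k + 1 / C W k) := by
  obtain ⟨m, hm⟩ := hn
  -- basic scalar facts
  have hCpos : ∀ k ≤ n+1, 0 < C W k := fun k hk => C_pos W hW hk
  have hspos : ∀ k ≤ n+1, 0 < sS W k := fun k hk => Real.sqrt_pos.mpr (hCpos k hk)
  have hsne : ∀ k ≤ n+1, sS W k ≠ 0 := fun k hk => ne_of_gt (hspos k hk)
  have hWne : ∀ i ≤ n+1, Real.sqrt (W i) ≠ 0 :=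
    fun i hi => ne_of_gt (Real.sqrt_pos.mpr (hW i hi))
  have hs0 : sS W 0 = 1 := by rw [sS, C_zero, Real.sqrt_one]
  have hsn1 : sS W (n+1) = 1 := by rw [sS, hC, Real.sqrt_one]
  have sqrt_odd : ∀ j ≤ m, Real.sqrt (W (2*j)) * sS W (2*j+1)
      = Real.sqrt (W (2*j+1)) * sS W (2*j) := by
    intro j hj
    rw [sS, sS, ← Real.sqrt_mul (le_of_lt (hW _ (by omega))),
      ← Real.sqrt_mul (le_of_lt (hW _ (by omega))),
      C_step_odd W hW (by omega) ⟨j, by ring⟩]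
  have sqrt_even : ∀ j ≤ m, Real.sqrt (W (2*j+2)) * sS W (2*j+2)
      = Real.sqrt (W (2*j+1)) * sS W (2*j+1) := by
    intro j hj
    rw [sS, sS, ← Real.sqrt_mul (le_of_lt (hW _ (by omega))),
      ← Real.sqrt_mul (le_of_lt (hW _ (by omega)))]
    rw [show 2*j+2 = (2*j+1)+1 from by ring, C_step_even W hW (by omega) ⟨j+1, by ring⟩]
  -- value lemmas
  have hfval : ∀ k, k ≤ n →
      fF n W k = ((-1)^(k/2) * sS W k + (-1)^((k+1)/2) * (sS W k)⁻¹)/2 := fun k hk => if_pos hk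
  have hgval : ∀ k, k ≤ n → gG n W k = (-1)^(k/2) * sS W k / 2 := fun k hk => if_pos hk
  have hhval : ∀ k, 1 ≤ k → hH W k = (-1)^((k+1)/2) * (sS W k)⁻¹ / 2 := fun k hk => if_pos hk
  have hf0 : fF n W 0 = 1 := by
    rw [hfval 0 (by omega)]; norm_num [hs0]
  have hfn1 : fF n W (n+1) = 0 := if_neg (by omega)
  have hgn1 : gG n W (n+1) = 0 := if_neg (by omega)
  have hh0 : hH W 0 = 0 := if_neg (by omega)
  -- the midpoint vector
  have hv23 : (2⁻¹ : ℂ) • (v₂ n W + v₃ n W)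
      = ∑ k ∈ Finset.Icc 1 n, ((fF n W k : ℝ) : ℂ) • ket n k := by
    rw [v₂, v₃, ← Finset.sum_add_distrib, Finset.smul_sum]
    refine Finset.sum_congr rfl fun k hk => ?_
    rw [Finset.mem_Icc] at hk
    rw [← add_smul, smul_smul, hfval k hk.2, sS]
    congr 1
    push_cast
    ring
  have hchi : ket n 0 + (2⁻¹ : ℂ) • (v₂ n W + v₃ n W) = vec n (fF n W) := by
    rw [hv23, vec_split, hf0, hfn1]
    push_cast
    simp
  -- the reflected vectors P and Q
  set P : EuclideanSpace ℂ (Fin (n+2)) :=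
    ∑ j ∈ Finset.range (m+1), ((gG n W (2*j) / Real.sqrt (W (2*j)) : ℝ) : ℂ) • psi n W (2*j)
    with hPdef
  set Q : EuclideanSpace ℂ (Fin (n+2)) :=
    ∑ j ∈ Finset.range (m+1),
      ((hH W (2*j+1) / Real.sqrt (W (2*j+1)) : ℝ) : ℂ) • psi n W (2*j+1) with hQdef
  have hp : P = vec n (gG n W) := by
    rw [hPdef, vec, show Finset.range (n+2) = Finset.range (2*(m+1)+1) from by
      rw [show n+2 = 2*(m+1)+1 from by omega], sum_range_odd_split,
      Finset.sum_range_succ (fun j => ((gG n W (2*j) : ℝ) : ℂ) • ket n (2*j)) (m+1),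
      show gG n W (2*(m+1)) = 0 from if_neg (by omega)]
    push_cast
    rw [zero_smul, add_zero]
    simp only [psi, smul_add, smul_smul]
    rw [Finset.sum_add_distrib]
    congr 1
    · refine Finset.sum_congr rfl fun j hj => ?_
      rw [Finset.mem_range] at hj
      congr 1
      exact div_mul_cancel₀ _ (by exact_mod_cast hWne (2*j) (by omega))
    · refine Finset.sum_congr rfl fun j hj => ?_
      rw [Finset.mem_range] at hj
      congr 1
      have hr : gG n W (2*j) / Real.sqrt (W (2*j)) * Real.sqrt (W (2*j+1)) = gG n W (2*j+1) := by
        have key := sqrt_odd j (by omega)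
        rw [hgval (2*j) (by omega), hgval (2*j+1) (by omega),
          show (2*j)/2 = j from by omega, show (2*j+1)/2 = j from by omega]
        have h1 := hWne (2*j) (by omega)
        have h4 : ((-1:ℝ)^j) ≠ 0 := by positivity
        field_simp
        linear_combination (-1:ℝ) * key
      exact_mod_cast hr
  have hq : Q = vec n (hH W) := by
    rw [hQdef, vec, show Finset.range (n+2) = Finset.range (2*(m+1)+1) from by
      rw [show n+2 = 2*(m+1)+1 from by omega], sum_range_odd_split,
      Finset.sum_range_succ' (fun j => ((hH W (2*j) : ℝ) : ℂ) • ket n (2*j)) (m+1), hh0]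
    push_cast
    rw [zero_smul, add_zero]
    simp only [psi, smul_add, smul_smul]
    rw [Finset.sum_add_distrib]
    rw [add_comm (∑ j ∈ Finset.range (m+1), ((hH W (2*(j+1)) : ℝ) : ℂ) • ket n (2*(j+1)))]
    congr 1
    · refine Finset.sum_congr rfl fun j hj => ?_
      rw [Finset.mem_range] at hj
      congr 1
      exact div_mul_cancel₀ _ (by exact_mod_cast hWne (2*j+1) (by omega))
    · refine Finset.sum_congr rfl fun j hj => ?_
      rw [Finset.mem_range] at hj
      rw [show 2*(j+1) = 2*j+1+1 from by ring]
      congr 1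
      have hr : hH W (2*j+1) / Real.sqrt (W (2*j+1)) * Real.sqrt (W (2*j+1+1))
          = hH W (2*j+1+1) := by
        have key := sqrt_even j (by omega)
        rw [hhval (2*j+1) (by omega), hhval (2*j+1+1) (by omega),
          show (2*j+1+1)/2 = j+1 from by omega, show (2*j+1+1+1)/2 = j+1 from by omega]
        have h1 := hWne (2*j+1) (by omega)
        have h2 := hsne (2*j+1) (by omega)
        have h3 := hsne (2*j+1+1) (by omega)
        rw [show 2*j+1+1 = 2*j+2 from by ring] at *
        have h4 : ((-1:ℝ)^(j+1)) ≠ 0 := by positivity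
        field_simp
        linear_combination (1:ℝ) * key
      exact_mod_cast hr
  -- RA step
  have hRAchi : RA (vec n (fF n W)) = vec n (fun k => fF n W k - 2 * gG n W k) := by
    have hRAP : RA P = -P := by
      rw [hPdef, map_sum, ← Finset.sum_neg_distrib]
      refine Finset.sum_congr rfl fun j hj => ?_
      rw [Finset.mem_range] at hj
      rw [map_smul, hRAneg (2*j) (by omega) ⟨j, by ring⟩, smul_neg]
    have horth : RA (vec n (fF n W) - P) = vec n (fF n W) - P := by
      apply hRAid
      intro i hi hie
      obtain ⟨j, hj⟩ := hie
      have hj' : i = 2*j := by omega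
      subst hj'
      have hjm : j ≤ m := by omega
      rw [hp, vec_sub, inner_psi_vec n W _ (2*j) (by omega)]
      rw [Complex.ofReal_eq_zero]
      have e1 : fF n W (2*j) - gG n W (2*j) = (-1)^j * (sS W (2*j))⁻¹/2 := by
        rw [hfval (2*j) (by omega), hgval (2*j) (by omega),
          show (2*j)/2 = j from by omega, show (2*j+1)/2 = j from by omega]
        ring
      have e2 : fF n W (2*j+1) - gG n W (2*j+1) = -((-1)^j * (sS W (2*j+1))⁻¹/2) := by
        rw [hfval (2*j+1) (by omega), hgval (2*j+1) (by omega),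
          show (2*j+1)/2 = j from by omega, show (2*j+1+1)/2 = j+1 from by omega]
        ring
      rw [e1, e2]
      have key := sqrt_odd j hjm
      have h2 := hsne (2*j) (by omega)
      have h3 := hsne (2*j+1) (by omega)
      have h4 : ((-1:ℝ)^j) ≠ 0 := by positivity
      field_simp
      linear_combination ((-1:ℝ)^j) * key
    calc RA (vec n (fF n W)) = RA (P + (vec n (fF n W) - P)) := by rw [add_sub_cancel]
      _ = -P + (vec n (fF n W) - P) := by rw [map_add, hRAP, horth]
      _ = vec n (fF n W) - P - P := by abel
      _ = vec n (fun k => fF n W k - 2 * gG n W k) := by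
          rw [hp, vec_sub, vec_sub]
          exact vec_congr n _ _ (fun k hk => by ring)
  -- RB step
  have key1 : ∀ j ≤ m, (fF n W (2*j+1) - 2*gG n W (2*j+1)) - hH W (2*j+1)
      = (-1)^(j+1) * sS W (2*j+1)/2 := by
    intro j hj
    rw [hfval (2*j+1) (by omega), hgval (2*j+1) (by omega), hhval (2*j+1) (by omega),
      show (2*j+1)/2 = j from by omega, show (2*j+1+1)/2 = j+1 from by omega]
    have h2 := hsne (2*j+1) (by omega)
    field_simp
    ring
  have key2 : ∀ j ≤ m, (fF n W (2*j+2) - 2*gG n W (2*j+2)) - hH W (2*j+2)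
      = (-1)^j * sS W (2*j+2)/2 := by
    intro j hj
    by_cases hjm : j = m
    · have hind : 2*j+2 = n+1 := by omega
      rw [hind, hfn1, hgn1, hhval (n+1) (by omega), hsn1,
        show (n+1+1)/2 = j+1 from by omega]
      ring
    · have hlt : 2*j+2 ≤ n := by omega
      rw [hfval (2*j+2) hlt, hgval (2*j+2) hlt, hhval (2*j+2) (by omega),
        show (2*j+2)/2 = j+1 from by omega, show (2*j+2+1)/2 = j+1 from by omega]
      have h2 := hsne (2*j+2) (by omega)
      field_simp
      ring
  have hRBy : RB (vec n (fun k => fF n W k - 2 * gG n W k))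
      = vec n (fun k => (fF n W k - 2 * gG n W k) - 2 * hH W k) := by
    have hRBQ : RB Q = -Q := by
      rw [hQdef, map_sum, ← Finset.sum_neg_distrib]
      refine Finset.sum_congr rfl fun j hj => ?_
      rw [Finset.mem_range] at hj
      rw [map_smul, hRBneg (2*j+1) (by omega) ⟨j, by ring⟩, smul_neg]
    have horth : RB (vec n (fun k => fF n W k - 2 * gG n W k) - Q)
        = vec n (fun k => fF n W k - 2 * gG n W k) - Q := by
      apply hRBid
      intro i hi hio
      obtain ⟨j, hj⟩ := hio
      have hj' : i = 2*j+1 := by omega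
      subst hj'
      have hjm : j ≤ m := by omega
      rw [hq, vec_sub, inner_psi_vec n W _ (2*j+1) (by omega)]
      rw [Complex.ofReal_eq_zero]
      rw [show 2*j+1+1 = 2*j+2 from by ring]
      rw [key1 j hjm, key2 j hjm]
      have key := sqrt_even j hjm
      linear_combination (((-1:ℝ)^j)/2) * key
    calc RB (vec n (fun k => fF n W k - 2 * gG n W k))
        = RB (Q + (vec n (fun k => fF n W k - 2 * gG n W k) - Q)) := by rw [add_sub_cancel]
      _ = -Q + (vec n (fun k => fF n W k - 2 * gG n W k) - Q) := by rw [map_add, hRBQ, horth]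
      _ = vec n (fun k => fF n W k - 2 * gG n W k) - Q - Q := by abel
      _ = vec n (fun k => (fF n W k - 2 * gG n W k) - 2 * hH W k) := by
          rw [hq, vec_sub, vec_sub]
          exact vec_congr n _ _ (fun k hk => by ring)
  -- assemble part 1
  set Z : ℕ → ℝ := fun k => 2 * gG n W k + 2 * hH W k - fF n W k with hZdef
  have part1 : -(RB (RA (ket n 0 + (2⁻¹ : ℂ) • (v₂ n W + v₃ n W))))
      = ((-1 : ℂ) ^ ((n + 1) / 2)) • ket n (n + 1) + (2⁻¹ : ℂ) • (v₂ n W + v₃ n W) := by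
    rw [hchi, hRAchi, hRBy, vec_neg]
    have hzz : vec n (fun k => -((fun k => (fF n W k - 2 * gG n W k) - 2 * hH W k) k))
        = vec n Z := by
      refine vec_congr n _ _ (fun k hk => ?_)
      simp only [hZdef]
      ring
    rw [hzz, vec_split, hv23]
    have hz0 : Z 0 = 0 := by
      simp only [hZdef, hh0, hf0, hgval 0 (by omega)]
      norm_num [hs0]
    have hzn1 : Z (n+1) = (-1:ℝ)^(m+1) := by
      simp only [hZdef, hfn1, hgn1, hhval (n+1) (by omega), hsn1,
        show (n+1+1)/2 = m+1 from by omega]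
      ring
    rw [hz0, hzn1]
    have hmid : ∀ k ∈ Finset.Icc 1 n,
        ((Z k : ℝ) : ℂ) • ket n k = ((fF n W k : ℝ) : ℂ) • ket n k := by
      intro k hk
      rw [Finset.mem_Icc] at hk
      congr 2
      simp only [hZdef]
      rw [hfval k hk.2, hgval k hk.2, hhval k hk.1]
      ring
    rw [Finset.sum_congr rfl hmid]
    push_cast
    rw [show (n+1)/2 = m+1 from by omega]
    simp only [Complex.ofReal_zero, zero_smul, zero_add]
    exact add_comm _ _
  -- norms
  have hnorm : ∀ F : ℕ → ℝ, ‖vec n F‖^2 = ∑ k ∈ Finset.range (n+2), (F k)^2 := by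
    intro F
    have h1 : (inner ℂ (vec n F) (vec n F) : ℂ)
        = ((∑ k ∈ Finset.range (n+2), (F k)^2 : ℝ) : ℂ) := by
      nth_rewrite 1 [vec]
      rw [sum_inner]
      push_cast
      refine Finset.sum_congr rfl fun k hk => ?_
      rw [inner_smul_left, inner_ket_vec n F k (Finset.mem_range.mp hk), Complex.conj_ofReal]
      push_cast
      ring
    calc ‖vec n F‖^2 = RCLike.re (inner ℂ (vec n F) (vec n F) : ℂ) :=
          (inner_self_eq_norm_sq (𝕜 := ℂ) _).symm
      _ = _ := by rw [h1]; exact Complex.ofReal_re _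
  have hsub : Finset.Icc 1 n ⊆ Finset.range (n+2) := by
    intro x hx
    rw [Finset.mem_Icc] at hx
    rw [Finset.mem_range]
    omega
  have hpow : ∀ k : ℕ, ((-1:ℝ)^k)^2 = 1 := by
    intro k
    rw [← pow_mul, mul_comm, pow_mul]
    norm_num
  have hv2 : ‖v₂ n W‖ ^ 2 = ∑ k ∈ Finset.Icc 1 n, C W k := by
    have hvec : v₂ n W
        = vec n (fun k => if 1 ≤ k ∧ k ≤ n then (-1)^(k/2) * sS W k else 0) := by
      rw [vec_split, if_neg (by omega : ¬(1 ≤ 0 ∧ 0 ≤ n)),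
        if_neg (by omega : ¬(1 ≤ n+1 ∧ n+1 ≤ n)), v₂]
      push_cast
      rw [zero_smul, zero_smul, zero_add, add_zero]
      refine Finset.sum_congr rfl fun k hk => ?_
      rw [Finset.mem_Icc] at hk
      rw [if_pos hk]
      congr 1
      simp only [sS]
      push_cast
      ring
    rw [hvec, hnorm, ← Finset.sum_subset hsub (fun x hx hnx => by
      rw [if_neg (by rw [Finset.mem_Icc] at hnx; exact hnx)]
      norm_num)]
    refine Finset.sum_congr rfl fun k hk => ?_
    rw [Finset.mem_Icc] at hk
    rw [if_pos hk, mul_pow, hpow, one_mul, sS, Real.sq_sqrt (hCpos k (by omega)).le]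
  have hv3 : ‖v₃ n W‖ ^ 2 = ∑ k ∈ Finset.Icc 1 n, 1 / C W k := by
    have hvec : v₃ n W
        = vec n (fun k => if 1 ≤ k ∧ k ≤ n then (-1)^((k+1)/2) * (sS W k)⁻¹ else 0) := by
      rw [vec_split, if_neg (by omega : ¬(1 ≤ 0 ∧ 0 ≤ n)),
        if_neg (by omega : ¬(1 ≤ n+1 ∧ n+1 ≤ n)), v₃]
      push_cast
      rw [zero_smul, zero_smul, zero_add, add_zero]
      refine Finset.sum_congr rfl fun k hk => ?_
      rw [Finset.mem_Icc] at hk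
      rw [if_pos hk]
      congr 1
      simp only [sS]
      push_cast
      ring
    rw [hvec, hnorm, ← Finset.sum_subset hsub (fun x hx hnx => by
      rw [if_neg (by rw [Finset.mem_Icc] at hnx; exact hnx)]
      norm_num)]
    refine Finset.sum_congr rfl fun k hk => ?_
    rw [Finset.mem_Icc] at hk
    rw [if_pos hk, mul_pow, hpow, one_mul, inv_pow, sS,
      Real.sq_sqrt (hCpos k (by omega)).le, one_div]
  refine ⟨part1, hv2, hv3, ?_⟩
  rw [Finset.sum_add_distrib, ← hv2, ← hv3, norm_smul,
    show ‖(2⁻¹ : ℂ)‖ = 2⁻¹ from by rw [norm_inv]; norm_num]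
  nlinarith [norm_add_le (v₂ n W) (v₃ n W), norm_nonneg (v₂ n W), norm_nonneg (v₃ n W),
    norm_nonneg (v₂ n W + v₃ n W), sq_nonneg (‖v₂ n W‖ - ‖v₃ n W‖)]

end Stmt17
end
end

section
/- Let G' be an extended 1-dimensional hierarchical graph with n odd and with dangling-edge weights W_0, W_{n+1} > 0 chosen so that C_{n+1} = 1, and let U = R_B R_A be one step of the quantum walk on G'. Then −U transduces |ss'⟩ = |L_0⟩ into (−1)^{(n+1)/2} |t't⟩ = (−1)^{(n+1)/2} |L_{n+1}⟩ with transduction complexity not exceeding (1/2) Σ_{k=1}^{n} (C_k + 1/C_k); that is, there exists a vector v in the span of {|e⟩ : e ∈ E} with ‖v‖² ≤ (1/2) Σ_{k=1}^{n} (C_k + 1/C_k) such that −U(|L_0⟩ + v) = (−1)^{(n+1)/2} |L_{n+1}⟩ + v. -/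
/-!
**Statement 18.**
Let `G'` be an extended 1-dimensional hierarchical graph with `n` odd and with dangling-edge
weights `W_0, W_{n+1} > 0` chosen so that `C_{n+1} = 1`, and let `U = R_B R_A` be one step of
the quantum walk on `G'`.  Then `−U` transduces `|ss'⟩ = |L_0⟩` into
`(−1)^{(n+1)/2} |t't⟩ = (−1)^{(n+1)/2} |L_{n+1}⟩` with transduction complexity not exceeding
`(1/2) ∑_{k=1}^{n} (C_k + 1/C_k)`: there exists a vector `v` in the span of
`{|e⟩ : e ∈ E}` with `‖v‖² ≤ (1/2) ∑_{k=1}^{n} (C_k + 1/C_k)` such that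
`−U(|L_0⟩ + v) = (−1)^{(n+1)/2} |L_{n+1}⟩ + v`.

The hierarchical graph is modelled abstractly: vertices `V` carry a layer `vlayer u ≤ n`,
edges `E` carry a layer `elayer e ∈ {1, …, n}` and endpoint maps `lo` (in `S_{elayer e − 1}`)
and `hi` (in `S_{elayer e}`); `s` and `t` are the unique vertices of layers `0` and `n`;
every vertex of `S_i` (`i < n`) has exactly `d⁺_i` up-edges and every vertex of `S_i`
(`i ≥ 1`) has exactly `d⁻_i` down-edges.  All original edges have weight 1 and
`W_i = |L_i| > 0` for `1 ≤ i ≤ n`; `C_k = ∏_{i=1}^{k} (W_{i−1}/W_i)^{(−1)^i}`.  The walk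
space is `EuclideanSpace ℂ (E ⊕ Bool)` (`Sum.inr false = ss'`, `Sum.inr true = t't`);
`|L_i⟩ = (1/√(W_i)) ∑_{e ∈ L_i} |e⟩` and `ψ_u = ∑_{e ∼ u} √(w_e) |e⟩`.  The graph is
bipartite with parts `A` (vertices of even layer) and `B` (vertices of odd layer); `R_A` is
the unitary acting as `−1` on `span{ψ_u : u ∈ A}` and as the identity on its orthogonal
complement, specified by these defining properties (similarly `R_B`).
-/

noncomputable section

namespace Stmt18

variable {V E : Type*} [Fintype V] [Fintype E] [DecidableEq V] [DecidableEq E]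

def ket (x : E ⊕ Bool) : EuclideanSpace ℂ (E ⊕ Bool) := EuclideanSpace.single x 1

/-- The weight `W_i` of the `i`-th edge layer: `W_0` and `W_{n+1}` are the weights of the
dangling edges, and `W_i = |L_i|` for `1 ≤ i ≤ n`. -/
def Wt (n : ℕ) (elayer : E → ℕ) (W0 Wn1 : ℝ) (i : ℕ) : ℝ :=
  if i = 0 then W0 else if i = n + 1 then Wn1
  else ((Finset.univ.filter fun e => elayer e = i).card : ℝ)

/-- The normalized layer-uniform state `|L_i⟩`. -/
def Lket (n : ℕ) (elayer : E → ℕ) (W0 Wn1 : ℝ) (i : ℕ) : EuclideanSpace ℂ (E ⊕ Bool) :=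
  if i = 0 then ket (Sum.inr false) else if i = n + 1 then ket (Sum.inr true)
  else ((Real.sqrt (Wt n elayer W0 Wn1 i))⁻¹ : ℂ) •
    ∑ e ∈ Finset.univ.filter (fun e => elayer e = i), ket (Sum.inl e)

/-- The star state `ψ_u` of a vertex of the extended hierarchical graph. -/
def psi (lo hi : E → V) (s t : V) (W0 Wn1 : ℝ) (u : V) : EuclideanSpace ℂ (E ⊕ Bool) :=
  (∑ e ∈ Finset.univ.filter (fun e => hi e = u), ket (Sum.inl e)) +
  (∑ e ∈ Finset.univ.filter (fun e => lo e = u), ket (Sum.inl e)) +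
  (if u = s then (Real.sqrt W0 : ℂ) • ket (Sum.inr false) else 0) +
  (if u = t then (Real.sqrt Wn1 : ℂ) • ket (Sum.inr true) else 0)

/-- `C_k = ∏_{i=1}^{k} (W_{i−1}/W_i)^{(−1)^i}`. -/
def C (n : ℕ) (elayer : E → ℕ) (W0 Wn1 : ℝ) (k : ℕ) : ℝ :=
  ∏ i ∈ Finset.Icc 1 k, (Wt n elayer W0 Wn1 (i - 1) / Wt n elayer W0 Wn1 i) ^ ((-1 : ℤ) ^ i)

-- ### auxiliary
lemma inner_ket (x y : E ⊕ Bool) : (inner ℂ (ket x) (ket y) : ℂ) = if x = y then 1 else 0 := by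
  rw [ket, ket, EuclideanSpace.inner_single_left]
  simp [EuclideanSpace.single_apply]

lemma inner_sum_ket_sum_ket (s₁ s₂ : Finset E) :
    (inner ℂ (∑ e ∈ s₁, (ket (Sum.inl e) : EuclideanSpace ℂ (E ⊕ Bool)))
      (∑ e ∈ s₂, ket (Sum.inl e)) : ℂ) = ((s₁ ∩ s₂).card : ℝ) := by
  rw [sum_inner]
  have : ∀ e ∈ s₁, (inner ℂ (ket (Sum.inl e) : EuclideanSpace ℂ (E ⊕ Bool))
      (∑ e' ∈ s₂, ket (Sum.inl e')) : ℂ) = if e ∈ s₂ then 1 else 0 := by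
    intro e _
    rw [inner_sum]
    simp only [inner_ket, Sum.inl.injEq]
    rw [Finset.sum_ite_eq s₂ e (fun _ => (1:ℂ))]
  rw [Finset.sum_congr rfl this]
  rw [Finset.sum_ite_mem]
  simp [Finset.inter_comm]

lemma inner_sum_ket_inr (s₁ : Finset E) (b : Bool) :
    (inner ℂ (∑ e ∈ s₁, (ket (Sum.inl e) : EuclideanSpace ℂ (E ⊕ Bool))) (ket (Sum.inr b)) : ℂ) = 0 := by
  rw [sum_inner]
  apply Finset.sum_eq_zero
  intro e _
  rw [inner_ket]
  simp

lemma inner_inr_sum_ket (s₁ : Finset E) (b : Bool) :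
    (inner ℂ (ket (Sum.inr b) : EuclideanSpace ℂ (E ⊕ Bool)) (∑ e ∈ s₁, ket (Sum.inl e)) : ℂ) = 0 := by
  rw [inner_sum]
  apply Finset.sum_eq_zero
  intro e _
  rw [inner_ket]
  simp

def Le (elayer : E → ℕ) (i : ℕ) : Finset E := Finset.univ.filter (fun e => elayer e = i)
def Sv (vlayer : V → ℕ) (i : ℕ) : Finset V := Finset.univ.filter (fun u => vlayer u = i)

section Graph
variable (n : ℕ) (vlayer : V → ℕ) (elayer : E → ℕ) (lo hi : E → V) (s t : V) (W0 Wn1 : ℝ)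

lemma Wt_mid (i : ℕ) (h1 : 1 ≤ i) (h2 : i ≤ n) :
    Wt n elayer W0 Wn1 i = ((Le elayer i).card : ℝ) := by
  have h0 : i ≠ 0 := by omega
  have hn1 : i ≠ n + 1 := by omega
  simp [Wt, Le, h0, hn1]

lemma Lket_zero : Lket n elayer W0 Wn1 0 = (ket (Sum.inr false) : EuclideanSpace ℂ (E ⊕ Bool)) := by
  simp [Lket]

lemma Lket_top : Lket n elayer W0 Wn1 (n+1) = (ket (Sum.inr true) : EuclideanSpace ℂ (E ⊕ Bool)) := by
  simp [Lket]

lemma Lket_mid (i : ℕ) (h1 : 1 ≤ i) (h2 : i ≤ n) :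
    Lket n elayer W0 Wn1 i
      = ((Real.sqrt (Wt n elayer W0 Wn1 i))⁻¹ : ℂ) • ∑ e ∈ Le elayer i, ket (Sum.inl e) := by
  have h0 : i ≠ 0 := by omega
  have hn1 : i ≠ n + 1 := by omega
  simp [Lket, Le, h0, hn1]

lemma smul_Lket_mid (i : ℕ) (h1 : 1 ≤ i) (h2 : i ≤ n) (hW : 0 < Wt n elayer W0 Wn1 i) :
    ((Real.sqrt (Wt n elayer W0 Wn1 i)) : ℂ) • Lket n elayer W0 Wn1 i
      = ∑ e ∈ Le elayer i, ket (Sum.inl e) := by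
  rw [Lket_mid n elayer W0 Wn1 i h1 h2, smul_smul]
  have : (Real.sqrt (Wt n elayer W0 Wn1 i) : ℂ) ≠ 0 := by
    simp only [ne_eq, Complex.ofReal_eq_zero]
    positivity
  rw [mul_inv_cancel₀ this, one_smul]

lemma card_Sv_eq_one (i : ℕ) (u0 : V) (h1 : vlayer u0 = i) (h2 : ∀ u, vlayer u = i → u = u0) :
    (Sv vlayer i).card = 1 := by
  rw [Finset.card_eq_one]
  refine ⟨u0, ?_⟩
  ext u
  simp only [Sv, Finset.mem_filter, Finset.mem_univ, true_and, Finset.mem_singleton]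
  exact ⟨h2 u, fun h => h ▸ h1⟩

lemma elayer_eq_of_hi (hhi : ∀ e, vlayer (hi e) = elayer e) (e : E) (u : V) (h : hi e = u) :
    elayer e = vlayer u := by rw [← h, hhi]

lemma elayer_eq_of_lo (hel : ∀ e, 1 ≤ elayer e ∧ elayer e ≤ n)
    (hlo : ∀ e, vlayer (lo e) = elayer e - 1) (e : E) (u : V) (h : lo e = u) :
    elayer e = vlayer u + 1 := by
  have h1 := hlo e
  have h2 := (hel e).1
  rw [h] at h1
  omega

lemma card_Le_down (hhi : ∀ e, vlayer (hi e) = elayer e) (dminus : ℕ → ℕ)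
    (hdm : ∀ u, 1 ≤ vlayer u → (Finset.univ.filter fun e => hi e = u).card = dminus (vlayer u))
    (k : ℕ) (hk1 : 1 ≤ k) :
    (Le elayer k).card = (Sv vlayer k).card * dminus k := by
  rw [Finset.card_eq_sum_card_fiberwise (f := hi) (t := Sv vlayer k)
    (fun e he => by
      simp only [Le, Finset.mem_coe, Finset.mem_filter, Finset.mem_univ, true_and] at he
      simp only [Sv, Finset.mem_coe, Finset.mem_filter, Finset.mem_univ, true_and, hhi, he])]
  rw [Finset.sum_congr rfl (fun u hu => ?_), Finset.sum_const, smul_eq_mul]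
  simp only [Sv, Finset.mem_filter, Finset.mem_univ, true_and] at hu
  have hfib : (Le elayer k).filter (fun e => hi e = u) = Finset.univ.filter fun e => hi e = u := by
    ext e
    simp only [Le, Finset.mem_filter, Finset.mem_univ, true_and, and_iff_right_iff_imp]
    intro h
    rw [elayer_eq_of_hi vlayer elayer hi hhi e u h, hu]
  rw [hfib, hdm u (by omega), hu]

lemma card_Le_up (hel : ∀ e, 1 ≤ elayer e ∧ elayer e ≤ n)
    (hlo : ∀ e, vlayer (lo e) = elayer e - 1) (dplus : ℕ → ℕ)
    (hdp : ∀ u, vlayer u < n → (Finset.univ.filter fun e => lo e = u).card = dplus (vlayer u))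
    (k : ℕ) (hk1 : 1 ≤ k) (hkn : k ≤ n) :
    (Le elayer k).card = (Sv vlayer (k-1)).card * dplus (k-1) := by
  rw [Finset.card_eq_sum_card_fiberwise (f := lo) (t := Sv vlayer (k-1))
    (fun e he => by
      simp only [Le, Finset.mem_coe, Finset.mem_filter, Finset.mem_univ, true_and] at he
      simp only [Sv, Finset.mem_coe, Finset.mem_filter, Finset.mem_univ, true_and, hlo, he])]
  rw [Finset.sum_congr rfl (fun u hu => ?_), Finset.sum_const, smul_eq_mul]
  simp only [Sv, Finset.mem_filter, Finset.mem_univ, true_and] at hu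
  have hfib : (Le elayer k).filter (fun e => lo e = u) = Finset.univ.filter fun e => lo e = u := by
    ext e
    simp only [Le, Finset.mem_filter, Finset.mem_univ, true_and, and_iff_right_iff_imp]
    intro h
    have := elayer_eq_of_lo n vlayer elayer lo hel hlo e u h
    omega
  rw [hfib, hdp u (by omega), hu]

lemma inner_psi_inr (u : V) (b : Bool) :
    (inner ℂ (psi lo hi s t W0 Wn1 u) (ket (Sum.inr b)) : ℂ)
      = (if b = false ∧ u = s then (Real.sqrt W0 : ℂ) else 0)
        + (if b = true ∧ u = t then (Real.sqrt Wn1 : ℂ) else 0) := by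
  have hterm : ∀ (c : ℝ) (b' b : Bool) (P : Prop) [Decidable P],
      (inner ℂ (if P then (c : ℂ) • (ket (Sum.inr b') : EuclideanSpace ℂ (E ⊕ Bool)) else 0)
        (ket (Sum.inr b)) : ℂ) = if P ∧ b' = b then (c : ℂ) else 0 := by
    intro c b' b P _
    by_cases hP : P
    · by_cases hb : b' = b
      · rw [if_pos hP, if_pos ⟨hP, hb⟩, inner_smul_left, inner_ket, if_pos (by rw [hb]),
          Complex.conj_ofReal, mul_one]
      · rw [if_pos hP, if_neg (fun h => hb h.2), inner_smul_left, inner_ket,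
          if_neg (by simp [hb]), mul_zero]
    · rw [if_neg hP, if_neg (fun h => hP h.1)]
      exact inner_zero_left _
  rw [psi, inner_add_left, inner_add_left, inner_add_left, inner_sum_ket_inr,
    inner_sum_ket_inr, hterm, hterm]
  rcases b with _ | _ <;> by_cases hus : u = s <;> by_cases hut : u = t <;> simp [hus, hut]

lemma inner_psi_sum (u : V) (F : Finset E) :
    (inner ℂ (psi lo hi s t W0 Wn1 u) (∑ e ∈ F, (ket (Sum.inl e) : EuclideanSpace ℂ (E ⊕ Bool))) : ℂ)
      = ((((Finset.univ.filter fun e => hi e = u) ∩ F).card : ℝ) : ℂ)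
        + ((((Finset.univ.filter fun e => lo e = u) ∩ F).card : ℝ) : ℂ) := by
  rw [psi, inner_add_left, inner_add_left, inner_add_left, inner_sum_ket_sum_ket,
    inner_sum_ket_sum_ket]
  have h3 : (inner ℂ (if u = s then (Real.sqrt W0 : ℂ) • (ket (Sum.inr false) : EuclideanSpace ℂ (E ⊕ Bool)) else 0) (∑ e ∈ F, (ket (Sum.inl e) : EuclideanSpace ℂ (E ⊕ Bool))) : ℂ) = 0 := by
    split_ifs
    · rw [inner_smul_left, inner_inr_sum_ket, mul_zero]
    · exact inner_zero_left _
  have h4 : (inner ℂ (if u = t then (Real.sqrt Wn1 : ℂ) • (ket (Sum.inr true) : EuclideanSpace ℂ (E ⊕ Bool)) else 0) (∑ e ∈ F, (ket (Sum.inl e) : EuclideanSpace ℂ (E ⊕ Bool))) : ℂ) = 0 := by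
    split_ifs
    · rw [inner_smul_left, inner_inr_sum_ket, mul_zero]
    · exact inner_zero_left _
  rw [h3, h4]
  ring


lemma inner_psi_Lket
    (hvl : ∀ u, vlayer u ≤ n)
    (hel : ∀ e, 1 ≤ elayer e ∧ elayer e ≤ n)
    (hlo : ∀ e, vlayer (lo e) = elayer e - 1)
    (hhi : ∀ e, vlayer (hi e) = elayer e)
    (hs : vlayer s = 0) (hsu : ∀ u, vlayer u = 0 → u = s)
    (ht : vlayer t = n) (htu : ∀ u, vlayer u = n → u = t)
    (dplus dminus : ℕ → ℕ)
    (hdp : ∀ u, vlayer u < n →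
        (Finset.univ.filter fun e => lo e = u).card = dplus (vlayer u))
    (hdm : ∀ u, 1 ≤ vlayer u →
        (Finset.univ.filter fun e => hi e = u).card = dminus (vlayer u))
    (hWpos' : ∀ i, i ≤ n + 1 → 0 < Wt n elayer W0 Wn1 i)
    (u : V) (k : ℕ) (hk : k ≤ n + 1) :
    (inner ℂ (psi lo hi s t W0 Wn1 u) (Lket n elayer W0 Wn1 k) : ℂ)
      = ((if k = vlayer u ∨ k = vlayer u + 1
          then Real.sqrt (Wt n elayer W0 Wn1 k) / ((Sv vlayer (vlayer u)).card : ℝ)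
          else 0 : ℝ) : ℂ) := by
  by_cases hk0 : k = 0
  · subst hk0
    rw [Lket_zero, inner_psi_inr]
    by_cases h0 : vlayer u = 0
    · have hus : u = s := hsu u h0
      have hcard : (Sv vlayer 0).card = 1 := card_Sv_eq_one vlayer 0 s hs hsu
      have hW : Wt n elayer W0 Wn1 0 = W0 := by simp [Wt]
      subst hus
      simp [hs, hcard, hW]
    · have hus : u ≠ s := fun h => h0 (h ▸ hs)
      simp [hus, (show ¬ ((0:ℕ) = vlayer u) from fun h => h0 h.symm)]
  by_cases hkn1 : k = n + 1
  · subst hkn1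
    rw [Lket_top, inner_psi_inr]
    have hne : ¬ (n + 1 = vlayer u) := by have := hvl u; omega
    by_cases h0 : vlayer u = n
    · have hut : u = t := htu u h0
      have hcard : (Sv vlayer n).card = 1 := card_Sv_eq_one vlayer n t ht htu
      have hW : Wt n elayer W0 Wn1 (n+1) = Wn1 := by simp [Wt]
      subst hut
      simp [ht, hcard, hW, hne]
    · have hut : u ≠ t := fun h => h0 (h ▸ ht)
      simp [hut, hne, (show ¬ ((n:ℕ) = vlayer u) from fun h => h0 h.symm)]
  -- mid case
  have hk1 : 1 ≤ k := by omega
  have hkn : k ≤ n := by omega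
  have hWk : 0 < Wt n elayer W0 Wn1 k := hWpos' k (by omega)
  have hsq : (0:ℝ) < Real.sqrt (Wt n elayer W0 Wn1 k) := Real.sqrt_pos.2 hWk
  rw [Lket_mid n elayer W0 Wn1 k hk1 hkn, inner_smul_right, inner_psi_sum]
  have hint1 : (Finset.univ.filter fun e => hi e = u) ∩ Le elayer k
      = if k = vlayer u then (Finset.univ.filter fun e => hi e = u) else ∅ := by
    split_ifs with h
    · ext e
      simp only [Finset.mem_inter, Finset.mem_filter, Finset.mem_univ, true_and, Le,
        and_iff_left_iff_imp]
      intro hh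
      rw [elayer_eq_of_hi vlayer elayer hi hhi e u hh, h]
    · ext e
      simp only [Finset.mem_inter, Finset.mem_filter, Finset.mem_univ, true_and, Le,
        Finset.notMem_empty, iff_false, not_and]
      intro hh hh2
      exact h (by rw [← hh2, elayer_eq_of_hi vlayer elayer hi hhi e u hh])
  have hint2 : (Finset.univ.filter fun e => lo e = u) ∩ Le elayer k
      = if k = vlayer u + 1 then (Finset.univ.filter fun e => lo e = u) else ∅ := by
    split_ifs with h
    · ext e
      simp only [Finset.mem_inter, Finset.mem_filter, Finset.mem_univ, true_and, Le,
        and_iff_left_iff_imp]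
      intro hh
      rw [elayer_eq_of_lo n vlayer elayer lo hel hlo e u hh, h]
    · ext e
      simp only [Finset.mem_inter, Finset.mem_filter, Finset.mem_univ, true_and, Le,
        Finset.notMem_empty, iff_false, not_and]
      intro hh hh2
      exact h (by rw [← hh2, elayer_eq_of_lo n vlayer elayer lo hel hlo e u hh])
  rw [hint1, hint2]
  by_cases h1 : k = vlayer u
  · have h2 : ¬ (k = vlayer u + 1) := by omega
    rw [if_pos h1, if_neg h2, if_pos (Or.inl h1)]
    have hdmu : (Finset.univ.filter fun e => hi e = u).card = dminus k := by
      rw [hdm u (by omega), h1]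
    have hcount : Wt n elayer W0 Wn1 k = ((Sv vlayer k).card : ℝ) * (dminus k : ℝ) := by
      rw [Wt_mid n elayer W0 Wn1 k hk1 hkn]
      exact_mod_cast congrArg (Nat.cast (R := ℝ))
        (card_Le_down vlayer elayer hi hhi dminus hdm k hk1)
    have hScne : ((Sv vlayer k).card : ℝ) ≠ 0 := by
      intro h
      rw [h, zero_mul] at hcount
      linarith
    have hre : (Real.sqrt (Wt n elayer W0 Wn1 k))⁻¹ * ((dminus k : ℝ) + 0)
        = Real.sqrt (Wt n elayer W0 Wn1 k) / ((Sv vlayer (vlayer u)).card : ℝ) := by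
      rw [← h1, add_zero]
      field_simp
      rw [hcount]
      ring_nf
      rw [Real.sq_sqrt (by positivity)]
    rw [hdmu, Finset.card_empty, ← hre]
    push_cast
    ring
  by_cases h2 : k = vlayer u + 1
  · rw [if_neg h1, if_pos h2, if_pos (Or.inr h2)]
    have hvu : vlayer u = k - 1 := by omega
    have hvun : vlayer u < n := by omega
    have hdpu : (Finset.univ.filter fun e => lo e = u).card = dplus (k-1) := by
      rw [hdp u hvun, hvu]
    have hcount : Wt n elayer W0 Wn1 k = ((Sv vlayer (k-1)).card : ℝ) * (dplus (k-1) : ℝ) := by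
      rw [Wt_mid n elayer W0 Wn1 k hk1 hkn]
      exact_mod_cast congrArg (Nat.cast (R := ℝ))
        (card_Le_up n vlayer elayer lo hel hlo dplus hdp k hk1 hkn)
    have hScne : ((Sv vlayer (k-1)).card : ℝ) ≠ 0 := by
      intro h
      rw [h, zero_mul] at hcount
      linarith
    have hre : (Real.sqrt (Wt n elayer W0 Wn1 k))⁻¹ * (0 + (dplus (k-1) : ℝ))
        = Real.sqrt (Wt n elayer W0 Wn1 k) / ((Sv vlayer (vlayer u)).card : ℝ) := by
      rw [hvu, zero_add]
      field_simp
      rw [hcount]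
      ring_nf
      rw [Real.sq_sqrt (mul_nonneg (Nat.cast_nonneg _) (Nat.cast_nonneg _))]
    rw [hdpu, Finset.card_empty, ← hre]
    push_cast
    ring
  · rw [if_neg h1, if_neg h2, if_neg (by tauto)]
    simp

end Graph

def vecc (n : ℕ) (elayer : E → ℕ) (W0 Wn1 : ℝ) (c : ℕ → ℝ) : EuclideanSpace ℂ (E ⊕ Bool) :=
  ∑ k ∈ Finset.range (n+2), (c k : ℂ) • Lket n elayer W0 Wn1 k

def sagg (vlayer : V → ℕ) (lo hi : E → V) (s t : V) (W0 Wn1 : ℝ) (i : ℕ) :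
    EuclideanSpace ℂ (E ⊕ Bool) :=
  ∑ u ∈ Sv vlayer i, psi lo hi s t W0 Wn1 u

section Graph2
variable (n : ℕ) (vlayer : V → ℕ) (elayer : E → ℕ) (lo hi : E → V) (s t : V) (W0 Wn1 : ℝ)

lemma inner_psi_vecc
    (hvl : ∀ u, vlayer u ≤ n)
    (hel : ∀ e, 1 ≤ elayer e ∧ elayer e ≤ n)
    (hlo : ∀ e, vlayer (lo e) = elayer e - 1)
    (hhi : ∀ e, vlayer (hi e) = elayer e)
    (hs : vlayer s = 0) (hsu : ∀ u, vlayer u = 0 → u = s)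
    (ht : vlayer t = n) (htu : ∀ u, vlayer u = n → u = t)
    (dplus dminus : ℕ → ℕ)
    (hdp : ∀ u, vlayer u < n →
        (Finset.univ.filter fun e => lo e = u).card = dplus (vlayer u))
    (hdm : ∀ u, 1 ≤ vlayer u →
        (Finset.univ.filter fun e => hi e = u).card = dminus (vlayer u))
    (hWpos' : ∀ i, i ≤ n + 1 → 0 < Wt n elayer W0 Wn1 i)
    (u : V) (c : ℕ → ℝ) :
    (inner ℂ (psi lo hi s t W0 Wn1 u) (vecc n elayer W0 Wn1 c) : ℂ)
      = (((c (vlayer u) * Real.sqrt (Wt n elayer W0 Wn1 (vlayer u))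
          + c (vlayer u + 1) * Real.sqrt (Wt n elayer W0 Wn1 (vlayer u + 1)))
          / ((Sv vlayer (vlayer u)).card : ℝ) : ℝ) : ℂ) := by
  rw [vecc, inner_sum]
  have hterm : ∀ k ∈ Finset.range (n+2),
      (inner ℂ (psi lo hi s t W0 Wn1 u) ((c k : ℂ) • Lket n elayer W0 Wn1 k) : ℂ)
        = (if k = vlayer u then ((c k * Real.sqrt (Wt n elayer W0 Wn1 k)
              / ((Sv vlayer (vlayer u)).card : ℝ) : ℝ) : ℂ) else 0)
          + (if k = vlayer u + 1 then ((c k * Real.sqrt (Wt n elayer W0 Wn1 k)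
              / ((Sv vlayer (vlayer u)).card : ℝ) : ℝ) : ℂ) else 0) := by
    intro k hkmem
    rw [Finset.mem_range] at hkmem
    rw [inner_smul_right,
      inner_psi_Lket n vlayer elayer lo hi s t W0 Wn1 hvl hel hlo hhi hs hsu ht htu
        dplus dminus hdp hdm hWpos' u k (by omega)]
    by_cases h1 : k = vlayer u
    · rw [if_pos (Or.inl h1), if_pos h1, if_neg (by omega)]
      push_cast
      ring
    · by_cases h2 : k = vlayer u + 1
      · rw [if_pos (Or.inr h2), if_neg h1, if_pos h2]
        push_cast
        ring
      · rw [if_neg (by tauto), if_neg h1, if_neg h2]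
        simp
  rw [Finset.sum_congr rfl hterm, Finset.sum_add_distrib,
    Finset.sum_ite_eq' (Finset.range (n+2)) (vlayer u),
    Finset.sum_ite_eq' (Finset.range (n+2)) (vlayer u + 1),
    if_pos (Finset.mem_range.2 (by have := hvl u; omega)),
    if_pos (Finset.mem_range.2 (by have := hvl u; omega))]
  push_cast
  ring

lemma Le_zero_empty (hel : ∀ e, 1 ≤ elayer e ∧ elayer e ≤ n) : Le elayer 0 = (∅ : Finset E) := by
  ext e
  simp only [Le, Finset.mem_filter, Finset.mem_univ, true_and, Finset.notMem_empty, iff_false]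
  have := (hel e).1
  omega

lemma Le_top_empty (hel : ∀ e, 1 ≤ elayer e ∧ elayer e ≤ n) :
    Le elayer (n+1) = (∅ : Finset E) := by
  ext e
  simp only [Le, Finset.mem_filter, Finset.mem_univ, true_and, Finset.notMem_empty, iff_false]
  have := (hel e).2
  omega

lemma sagg_eq
    (hn1 : 1 ≤ n)
    (hel : ∀ e, 1 ≤ elayer e ∧ elayer e ≤ n)
    (hlo : ∀ e, vlayer (lo e) = elayer e - 1)
    (hhi : ∀ e, vlayer (hi e) = elayer e)
    (hs : vlayer s = 0) (ht : vlayer t = n)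
    (hWpos' : ∀ i, i ≤ n + 1 → 0 < Wt n elayer W0 Wn1 i)
    (hW0eq : Wt n elayer W0 Wn1 0 = W0) (hWn1eq : Wt n elayer W0 Wn1 (n+1) = Wn1)
    (i : ℕ) (hile : i ≤ n) :
    sagg vlayer lo hi s t W0 Wn1 i
      = (Real.sqrt (Wt n elayer W0 Wn1 i) : ℂ) • Lket n elayer W0 Wn1 i
        + (Real.sqrt (Wt n elayer W0 Wn1 (i+1)) : ℂ) • Lket n elayer W0 Wn1 (i+1) := by
  have piece1 : ∑ u ∈ Sv vlayer i, ∑ e ∈ Finset.univ.filter (fun e => hi e = u),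
      (ket (Sum.inl e) : EuclideanSpace ℂ (E ⊕ Bool))
      = ∑ e ∈ Le elayer i, ket (Sum.inl e) := by
    rw [← Finset.sum_fiberwise_of_maps_to (g := hi) (t := Sv vlayer i)
      (fun e he => by
        simp only [Le, Finset.mem_coe, Finset.mem_filter, Finset.mem_univ, true_and] at he
        simp only [Sv, Finset.mem_coe, Finset.mem_filter, Finset.mem_univ, true_and, hhi, he])]
    refine Finset.sum_congr rfl (fun u hu => ?_)
    simp only [Sv, Finset.mem_filter, Finset.mem_univ, true_and] at hu
    refine Finset.sum_congr ?_ (fun _ _ => rfl)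
    ext e
    simp only [Le, Finset.mem_filter, Finset.mem_univ, true_and]
    constructor
    · intro hh
      exact ⟨by rw [elayer_eq_of_hi vlayer elayer hi hhi e u hh, hu], hh⟩
    · intro hh
      exact hh.2
  have piece2 : ∑ u ∈ Sv vlayer i, ∑ e ∈ Finset.univ.filter (fun e => lo e = u),
      (ket (Sum.inl e) : EuclideanSpace ℂ (E ⊕ Bool))
      = ∑ e ∈ Le elayer (i+1), ket (Sum.inl e) := by
    rw [← Finset.sum_fiberwise_of_maps_to (g := lo) (t := Sv vlayer i)
      (fun e he => by
        simp only [Le, Finset.mem_coe, Finset.mem_filter, Finset.mem_univ, true_and] at he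
        simp only [Sv, Finset.mem_coe, Finset.mem_filter, Finset.mem_univ, true_and, hlo, he]
        omega)]
    refine Finset.sum_congr rfl (fun u hu => ?_)
    simp only [Sv, Finset.mem_filter, Finset.mem_univ, true_and] at hu
    refine Finset.sum_congr ?_ (fun _ _ => rfl)
    ext e
    simp only [Le, Finset.mem_filter, Finset.mem_univ, true_and]
    constructor
    · intro hh
      exact ⟨by rw [elayer_eq_of_lo n vlayer elayer lo hel hlo e u hh, hu], hh⟩
    · intro hh
      exact hh.2
  have piece3 : (∑ u ∈ Sv vlayer i, if u = s then (Real.sqrt W0 : ℂ) •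
        (ket (Sum.inr false) : EuclideanSpace ℂ (E ⊕ Bool)) else 0)
      = if i = 0 then (Real.sqrt W0 : ℂ) • (ket (Sum.inr false) : EuclideanSpace ℂ (E ⊕ Bool))
        else 0 := by
    rw [Finset.sum_ite_eq' (Sv vlayer i) s]
    congr 1
    simp only [Sv, Finset.mem_filter, Finset.mem_univ, true_and, hs, eq_iff_iff]
    omega
  have piece4 : (∑ u ∈ Sv vlayer i, if u = t then (Real.sqrt Wn1 : ℂ) •
        (ket (Sum.inr true) : EuclideanSpace ℂ (E ⊕ Bool)) else 0)
      = if i = n then (Real.sqrt Wn1 : ℂ) • (ket (Sum.inr true) : EuclideanSpace ℂ (E ⊕ Bool))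
        else 0 := by
    rw [Finset.sum_ite_eq' (Sv vlayer i) t]
    congr 1
    simp only [Sv, Finset.mem_filter, Finset.mem_univ, true_and, ht, eq_iff_iff]
    omega
  rw [sagg]
  simp only [psi, Finset.sum_add_distrib]
  rw [piece1, piece2, piece3, piece4]
  by_cases hi0 : i = 0
  · subst hi0
    rw [Le_zero_empty n elayer hel, Finset.sum_empty, if_pos rfl, if_neg (by omega),
      Lket_zero, smul_Lket_mid n elayer W0 Wn1 1 le_rfl hn1 (hWpos' 1 (by omega)), hW0eq]
    abel
  by_cases hin : i = n
  · subst hin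
    rw [Le_top_empty i elayer hel, Finset.sum_empty, if_neg hi0, if_pos rfl, Lket_top,
      smul_Lket_mid i elayer W0 Wn1 i (by omega) le_rfl (hWpos' i (by omega)), hWn1eq]
    abel
  · rw [if_neg hi0, if_neg hin,
      smul_Lket_mid n elayer W0 Wn1 i (by omega) (by omega) (hWpos' i (by omega)),
      smul_Lket_mid n elayer W0 Wn1 (i+1) (by omega) (by omega) (hWpos' (i+1) (by omega))]
    abel

lemma reflect_apply
    (P : ℕ → Prop)
    (R : EuclideanSpace ℂ (E ⊕ Bool) →ₗ[ℂ] EuclideanSpace ℂ (E ⊕ Bool))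
    (hid : ∀ x, (∀ u, P (vlayer u) → (inner ℂ (psi lo hi s t W0 Wn1 u) x : ℂ) = 0) → R x = x)
    (x N : EuclideanSpace ℂ (E ⊕ Bool))
    (hRN : R N = -N)
    (horth : ∀ u, P (vlayer u) → (inner ℂ (psi lo hi s t W0 Wn1 u) (x - N) : ℂ) = 0) :
    R x = x - (2:ℂ) • N := by
  have hx : R (x - N) = x - N := hid _ horth
  have hsplit : R x = R (x - N) + R N := by
    rw [← map_add, sub_add_cancel]
  rw [hsplit, hx, hRN]
  module

lemma sagg_neg
    (P : ℕ → Prop)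
    (R : EuclideanSpace ℂ (E ⊕ Bool) →ₗ[ℂ] EuclideanSpace ℂ (E ⊕ Bool))
    (hneg : ∀ u, P (vlayer u) →
        R (psi lo hi s t W0 Wn1 u) = -psi lo hi s t W0 Wn1 u)
    (i : ℕ) (hPi : P i) :
    R (sagg vlayer lo hi s t W0 Wn1 i) = -(sagg vlayer lo hi s t W0 Wn1 i) := by
  rw [sagg, map_sum]
  rw [Finset.sum_congr rfl (fun u hu => hneg u (by
    simp only [Sv, Finset.mem_filter, Finset.mem_univ, true_and] at hu
    rw [hu]; exact hPi))]
  rw [Finset.sum_neg_distrib]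

end Graph2
section CC
variable (n : ℕ) (elayer : E → ℕ) (W0 Wn1 : ℝ)

lemma C_zero : C n elayer W0 Wn1 0 = 1 := by
  rw [C, Finset.Icc_eq_empty (by omega), Finset.prod_empty]

lemma C_succ (k : ℕ) : C n elayer W0 Wn1 (k+1)
    = C n elayer W0 Wn1 k * (Wt n elayer W0 Wn1 k / Wt n elayer W0 Wn1 (k+1)) ^ ((-1:ℤ)^(k+1)) := by
  rw [C, C, Finset.prod_Icc_succ_top (by omega : 1 ≤ k + 1)]
  simp

lemma C_pos (hWpos' : ∀ i, i ≤ n + 1 → 0 < Wt n elayer W0 Wn1 i) (k : ℕ) (hk : k ≤ n + 1) :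
    0 < C n elayer W0 Wn1 k := by
  rw [C]
  apply Finset.prod_pos
  intro i hi_
  rw [Finset.mem_Icc] at hi_
  exact zpow_pos (div_pos (hWpos' (i-1) (by omega)) (hWpos' i (by omega))) _

lemma rel_even (hWpos' : ∀ i, i ≤ n + 1 → 0 < Wt n elayer W0 Wn1 i)
    (i : ℕ) (hi_ : i ≤ n) (hie : Even i) :
    Real.sqrt (Wt n elayer W0 Wn1 i) * Real.sqrt (C n elayer W0 Wn1 (i+1))
      = Real.sqrt (Wt n elayer W0 Wn1 (i+1)) * Real.sqrt (C n elayer W0 Wn1 i) := by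
  have h1 : C n elayer W0 Wn1 (i+1)
      = C n elayer W0 Wn1 i * (Wt n elayer W0 Wn1 (i+1) / Wt n elayer W0 Wn1 i) := by
    rw [C_succ, Odd.neg_one_pow (Even.add_one hie), zpow_neg_one, inv_div]
  have hWi := hWpos' i (by omega)
  have hWi1 := hWpos' (i+1) (by omega)
  have h2 : Wt n elayer W0 Wn1 i * C n elayer W0 Wn1 (i+1)
      = Wt n elayer W0 Wn1 (i+1) * C n elayer W0 Wn1 i := by
    rw [h1]
    field_simp
  rw [← Real.sqrt_mul hWi.le, ← Real.sqrt_mul hWi1.le, h2]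

lemma rel_odd (hWpos' : ∀ i, i ≤ n + 1 → 0 < Wt n elayer W0 Wn1 i)
    (i : ℕ) (hi_ : i ≤ n) (hio : Odd i) :
    Real.sqrt (Wt n elayer W0 Wn1 i) * Real.sqrt (C n elayer W0 Wn1 i)
      = Real.sqrt (Wt n elayer W0 Wn1 (i+1)) * Real.sqrt (C n elayer W0 Wn1 (i+1)) := by
  have h1 : C n elayer W0 Wn1 (i+1)
      = C n elayer W0 Wn1 i * (Wt n elayer W0 Wn1 i / Wt n elayer W0 Wn1 (i+1)) := by
    rw [C_succ, Even.neg_one_pow (Odd.add_one hio), zpow_one]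
  have hWi := hWpos' i (by omega)
  have hWi1 := hWpos' (i+1) (by omega)
  have h2 : Wt n elayer W0 Wn1 i * C n elayer W0 Wn1 i
      = Wt n elayer W0 Wn1 (i+1) * C n elayer W0 Wn1 (i+1) := by
    rw [h1]
    field_simp
  rw [← Real.sqrt_mul hWi.le, ← Real.sqrt_mul hWi1.le, h2]

end CC

lemma sum_range_pair {M : Type*} [AddCommMonoid M] (g : ℕ → M) (m : ℕ) :
    ∑ k ∈ Finset.range (2*m), g k = ∑ j ∈ Finset.range m, (g (2*j) + g (2*j+1)) := by
  induction m with
  | zero => simp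
  | succ m ih =>
    rw [Finset.sum_range_succ, ← ih, show 2*(m+1) = 2*m+1+1 by ring, Finset.sum_range_succ,
      Finset.sum_range_succ, add_assoc]

lemma abound (sq ε δ : ℝ) (hs : 0 < sq) (hε : ε^2 = 1) (hδ : δ = 1 ∨ δ = -1) :
    (ε * ((sq + δ / sq) / 2))^2 ≤ 1/2 * (sq^2 + 1/sq^2) := by
  have h2 : (ε * ((sq + δ/sq)/2))^2 = (sq + δ/sq)^2/4 := by
    rw [mul_pow, hε, one_mul, div_pow]
    norm_num
  rw [h2]
  have hs2 : (0:ℝ) < sq^2 := by positivity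
  have hinv2 : (0:ℝ) < 1/sq^2 := by positivity
  have key : 2 ≤ sq^2 + 1/sq^2 := by
    have h0 : sq^2 + 1/sq^2 - 2 = (sq - 1/sq)^2 := by
      field_simp
      ring
    nlinarith [sq_nonneg (sq - 1/sq)]
  rcases hδ with h | h <;> subst h <;>
    (rw [div_le_iff₀ (by norm_num : (0:ℝ) < 4)]
     have hexp : (sq + 1/sq)^2 = sq^2 + 2 + 1/sq^2 := by
       field_simp
       ring
     have hexp2 : (sq + -1/sq)^2 = sq^2 - 2 + 1/sq^2 := by
       field_simp
       ring
     linarith)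

def sCf (n : ℕ) (elayer : E → ℕ) (W0 Wn1 : ℝ) (k : ℕ) : ℝ :=
  Real.sqrt (C n elayer W0 Wn1 k)
def rtf (n : ℕ) (elayer : E → ℕ) (W0 Wn1 : ℝ) (k : ℕ) : ℝ :=
  Real.sqrt (Wt n elayer W0 Wn1 k)
def af (n : ℕ) (elayer : E → ℕ) (W0 Wn1 : ℝ) (k : ℕ) : ℝ :=
  (-1)^(k/2) * (sCf n elayer W0 Wn1 k + (-1)^k / sCf n elayer W0 Wn1 k) / 2
def bf (n : ℕ) (elayer : E → ℕ) (W0 Wn1 : ℝ) (k : ℕ) : ℝ :=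
  (-1)^(k/2) * (sCf n elayer W0 Wn1 k - (-1)^k / sCf n elayer W0 Wn1 k) / 2
def wf (n : ℕ) (elayer : E → ℕ) (W0 Wn1 : ℝ) (k : ℕ) : ℝ :=
  if k = n+1 then 0 else af n elayer W0 Wn1 k
def xf (n : ℕ) (elayer : E → ℕ) (W0 Wn1 : ℝ) (k : ℕ) : ℝ := -(bf n elayer W0 Wn1 k)
def yf (n : ℕ) (elayer : E → ℕ) (W0 Wn1 : ℝ) (k : ℕ) : ℝ :=
  if k = 0 then 0 else -(af n elayer W0 Wn1 k)
def tAf (n : ℕ) (elayer : E → ℕ) (W0 Wn1 : ℝ) (j : ℕ) : ℝ :=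
  (-1:ℝ)^j * sCf n elayer W0 Wn1 (2*j) / (2 * rtf n elayer W0 Wn1 (2*j))
def tBf (n : ℕ) (elayer : E → ℕ) (W0 Wn1 : ℝ) (j : ℕ) : ℝ :=
  -((-1:ℝ)^j) / (2 * sCf n elayer W0 Wn1 (2*j+1) * rtf n elayer W0 Wn1 (2*j+1))

section Scalars
variable (n : ℕ) (elayer : E → ℕ) (W0 Wn1 : ℝ)
  (hWpos' : ∀ i, i ≤ n + 1 → 0 < Wt n elayer W0 Wn1 i)

include hWpos'

lemma sC_pos (k : ℕ) (hk : k ≤ n+1) : 0 < sCf n elayer W0 Wn1 k :=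
  Real.sqrt_pos.2 (C_pos n elayer W0 Wn1 hWpos' k hk)

lemma rt_pos (k : ℕ) (hk : k ≤ n+1) : 0 < rtf n elayer W0 Wn1 k :=
  Real.sqrt_pos.2 (hWpos' k hk)

lemma scalarA1 (j : ℕ) (hj : 2*j+1 ≤ n) :
    wf n elayer W0 Wn1 (2*j) - 2 * tAf n elayer W0 Wn1 j * rtf n elayer W0 Wn1 (2*j)
      = xf n elayer W0 Wn1 (2*j) := by
  have hs := (sC_pos n elayer W0 Wn1 hWpos' (2*j) (by omega)).ne'
  have hr := (rt_pos n elayer W0 Wn1 hWpos' (2*j) (by omega)).ne'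
  have hd : (2*j)/2 = j := by omega
  have hp : ((-1:ℝ))^(2*j) = 1 := Even.neg_one_pow ⟨j, by ring⟩
  rw [wf, if_neg (by omega), xf, af, bf, tAf, hd, hp]
  field_simp
  ring

lemma scalarA2 (j : ℕ) (hj : 2*j+1 ≤ n) :
    wf n elayer W0 Wn1 (2*j+1) - 2 * tAf n elayer W0 Wn1 j * rtf n elayer W0 Wn1 (2*j+1)
      = xf n elayer W0 Wn1 (2*j+1) := by
  have hs := (sC_pos n elayer W0 Wn1 hWpos' (2*j) (by omega)).ne'
  have hs1 := (sC_pos n elayer W0 Wn1 hWpos' (2*j+1) (by omega)).ne'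
  have hr := (rt_pos n elayer W0 Wn1 hWpos' (2*j) (by omega)).ne'
  have hr1 := (rt_pos n elayer W0 Wn1 hWpos' (2*j+1) (by omega)).ne'
  have hrel := rel_even n elayer W0 Wn1 hWpos' (2*j) (by omega) ⟨j, by ring⟩
  have hd : (2*j+1)/2 = j := by omega
  have hp : ((-1:ℝ))^(2*j+1) = -1 := Odd.neg_one_pow ⟨j, by ring⟩
  rw [wf, if_neg (by omega), xf, af, bf, tAf, hd, hp]
  simp only [sCf, rtf] at *
  field_simp
  linear_combination (2 * Real.sqrt (C n elayer W0 Wn1 (2*j+1))) * hrel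

lemma scalarA3 (j : ℕ) (hj : 2*j+1 ≤ n) :
    (wf n elayer W0 Wn1 (2*j) + xf n elayer W0 Wn1 (2*j)) * rtf n elayer W0 Wn1 (2*j)
      + (wf n elayer W0 Wn1 (2*j+1) + xf n elayer W0 Wn1 (2*j+1)) * rtf n elayer W0 Wn1 (2*j+1)
      = 0 := by
  have hs := (sC_pos n elayer W0 Wn1 hWpos' (2*j) (by omega)).ne'
  have hs1 := (sC_pos n elayer W0 Wn1 hWpos' (2*j+1) (by omega)).ne'
  have hrel := rel_even n elayer W0 Wn1 hWpos' (2*j) (by omega) ⟨j, by ring⟩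
  have hd : (2*j)/2 = j := by omega
  have hd1 : (2*j+1)/2 = j := by omega
  have hp : ((-1:ℝ))^(2*j) = 1 := Even.neg_one_pow ⟨j, by ring⟩
  have hp1 : ((-1:ℝ))^(2*j+1) = -1 := Odd.neg_one_pow ⟨j, by ring⟩
  rw [wf, if_neg (by omega), wf, if_neg (by omega), xf, xf, af, af, bf, bf, hd, hd1, hp, hp1]
  simp only [sCf, rtf] at *
  field_simp
  linear_combination (2 * (-1:ℝ)^j) * hrel

lemma scalarB1 (j : ℕ) (hj : 2*j+1 ≤ n) :
    xf n elayer W0 Wn1 (2*j+1) - 2 * tBf n elayer W0 Wn1 j * rtf n elayer W0 Wn1 (2*j+1)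
      = yf n elayer W0 Wn1 (2*j+1) := by
  have hs1 := (sC_pos n elayer W0 Wn1 hWpos' (2*j+1) (by omega)).ne'
  have hr1 := (rt_pos n elayer W0 Wn1 hWpos' (2*j+1) (by omega)).ne'
  have hd1 : (2*j+1)/2 = j := by omega
  have hp1 : ((-1:ℝ))^(2*j+1) = -1 := Odd.neg_one_pow ⟨j, by ring⟩
  rw [xf, yf, if_neg (by omega), af, bf, tBf, hd1, hp1]
  field_simp
  ring

lemma scalarB2 (j : ℕ) (hj : 2*j+1 ≤ n) :
    xf n elayer W0 Wn1 (2*j+2) - 2 * tBf n elayer W0 Wn1 j * rtf n elayer W0 Wn1 (2*j+2)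
      = yf n elayer W0 Wn1 (2*j+2) := by
  have hs1 := (sC_pos n elayer W0 Wn1 hWpos' (2*j+1) (by omega)).ne'
  have hs2 := (sC_pos n elayer W0 Wn1 hWpos' (2*j+2) (by omega)).ne'
  have hr1 := (rt_pos n elayer W0 Wn1 hWpos' (2*j+1) (by omega)).ne'
  have hr2 := (rt_pos n elayer W0 Wn1 hWpos' (2*j+2) (by omega)).ne'
  have hrel := rel_odd n elayer W0 Wn1 hWpos' (2*j+1) (by omega) ⟨j, by ring⟩
  have hd2 : (2*j+2)/2 = j+1 := by omega
  have hp2 : ((-1:ℝ))^(2*j+2) = 1 := Even.neg_one_pow ⟨j+1, by ring⟩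
  have hq : ((-1:ℝ))^(j+1) = -((-1:ℝ)^j) := by rw [pow_succ]; ring
  rw [xf, yf, if_neg (by omega), af, bf, tBf, hd2, hp2, hq]
  rw [show 2*j+1+1 = 2*j+2 from rfl] at hrel
  simp only [sCf, rtf] at *
  field_simp
  linear_combination (-2) * hrel

lemma scalarB3 (j : ℕ) (hj : 2*j+1 ≤ n) :
    (xf n elayer W0 Wn1 (2*j+1) + yf n elayer W0 Wn1 (2*j+1)) * rtf n elayer W0 Wn1 (2*j+1)
      + (xf n elayer W0 Wn1 (2*j+2) + yf n elayer W0 Wn1 (2*j+2)) * rtf n elayer W0 Wn1 (2*j+2)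
      = 0 := by
  have hs1 := (sC_pos n elayer W0 Wn1 hWpos' (2*j+1) (by omega)).ne'
  have hs2 := (sC_pos n elayer W0 Wn1 hWpos' (2*j+2) (by omega)).ne'
  have hrel := rel_odd n elayer W0 Wn1 hWpos' (2*j+1) (by omega) ⟨j, by ring⟩
  have hd1 : (2*j+1)/2 = j := by omega
  have hd2 : (2*j+2)/2 = j+1 := by omega
  have hp1 : ((-1:ℝ))^(2*j+1) = -1 := Odd.neg_one_pow ⟨j, by ring⟩
  have hp2 : ((-1:ℝ))^(2*j+2) = 1 := Even.neg_one_pow ⟨j+1, by ring⟩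
  have hq : ((-1:ℝ))^(j+1) = -((-1:ℝ)^j) := by rw [pow_succ]; ring
  rw [xf, xf, yf, if_neg (by omega), yf, if_neg (by omega), af, af, bf, bf, hd1, hd2, hp1,
    hp2, hq]
  rw [show 2*j+1+1 = 2*j+2 from rfl] at hrel
  simp only [sCf, rtf] at *
  field_simp
  linear_combination (-2 * Real.sqrt (C n elayer W0 Wn1 (2*j+1)) * Real.sqrt (C n elayer W0 Wn1 (2*j+2)) * (-1:ℝ)^j) * hrel

lemma af_zero : af n elayer W0 Wn1 0 = 1 := by
  rw [af, sCf, C_zero, Real.sqrt_one]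
  norm_num

lemma bf_zero : bf n elayer W0 Wn1 0 = 0 := by
  rw [bf, sCf, C_zero, Real.sqrt_one]
  norm_num

lemma af_top (hodd : Odd n) (hC : C n elayer W0 Wn1 (n+1) = 1) :
    af n elayer W0 Wn1 (n+1) = (-1:ℝ)^((n+1)/2) := by
  obtain ⟨m', hm⟩ := hodd
  have hp : ((-1:ℝ))^(n+1) = 1 := Even.neg_one_pow ⟨m'+1, by omega⟩
  rw [af, sCf, hC, Real.sqrt_one, hp]
  norm_num

lemma bf_top (hodd : Odd n) (hC : C n elayer W0 Wn1 (n+1) = 1) :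
    bf n elayer W0 Wn1 (n+1) = 0 := by
  obtain ⟨m', hm⟩ := hodd
  have hp : ((-1:ℝ))^(n+1) = 1 := Even.neg_one_pow ⟨m'+1, by omega⟩
  rw [bf, sCf, hC, Real.sqrt_one, hp]
  norm_num

lemma Lket_ortho (j k : ℕ) (hj1 : 1 ≤ j) (hjn : j ≤ n) (hk1 : 1 ≤ k) (hkn : k ≤ n) :
    (inner ℂ (Lket n elayer W0 Wn1 j) (Lket n elayer W0 Wn1 k) : ℂ)
      = if j = k then 1 else 0 := by
  rw [Lket_mid n elayer W0 Wn1 j hj1 hjn, Lket_mid n elayer W0 Wn1 k hk1 hkn,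
    inner_smul_left, inner_smul_right, inner_sum_ket_sum_ket]
  by_cases h : j = k
  · subst h
    rw [Finset.inter_self, if_pos rfl]
    have hW := hWpos' j (by omega)
    have hsq := Real.sqrt_pos.2 hW
    have hcard : ((Le elayer j).card : ℝ) = Wt n elayer W0 Wn1 j :=
      (Wt_mid n elayer W0 Wn1 j hj1 hjn).symm
    rw [hcard, map_inv₀, Complex.conj_ofReal]
    rw [show ((Real.sqrt (Wt n elayer W0 Wn1 j) : ℂ))⁻¹
        * (((Real.sqrt (Wt n elayer W0 Wn1 j) : ℂ))⁻¹ * ((Wt n elayer W0 Wn1 j : ℝ) : ℂ))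
        = (((Real.sqrt (Wt n elayer W0 Wn1 j))⁻¹
            * ((Real.sqrt (Wt n elayer W0 Wn1 j))⁻¹ * Wt n elayer W0 Wn1 j) : ℝ) : ℂ) from by
      push_cast
      ring]
    rw [show ((Real.sqrt (Wt n elayer W0 Wn1 j))⁻¹
        * ((Real.sqrt (Wt n elayer W0 Wn1 j))⁻¹ * Wt n elayer W0 Wn1 j) : ℝ) = 1 from by
      have h := Real.mul_self_sqrt hW.le
      field_simp
      rw [Real.sq_sqrt hW.le]]
    norm_num
  · rw [if_neg h]
    have hinter : Le elayer j ∩ Le elayer k = ∅ := by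
      ext e
      simp only [Finset.mem_inter, Le, Finset.mem_filter, Finset.mem_univ, true_and,
        Finset.notMem_empty, iff_false, not_and]
      intro h1 h2
      exact h (by omega)
    rw [hinter]
    simp

end Scalars

theorem hierarchical_transduction
    (n : ℕ) (vlayer : V → ℕ) (elayer : E → ℕ) (lo hi : E → V) (s t : V)
    (W0 Wn1 : ℝ) (hW0 : 0 < W0) (hWn1 : 0 < Wn1)
    (hvl : ∀ u, vlayer u ≤ n)
    (hel : ∀ e, 1 ≤ elayer e ∧ elayer e ≤ n)
    (hlo : ∀ e, vlayer (lo e) = elayer e - 1)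
    (hhi : ∀ e, vlayer (hi e) = elayer e)
    (hs : vlayer s = 0) (hsu : ∀ u, vlayer u = 0 → u = s)
    (ht : vlayer t = n) (htu : ∀ u, vlayer u = n → u = t)
    (dplus dminus : ℕ → ℕ)
    (hdp : ∀ u, vlayer u < n →
        (Finset.univ.filter fun e => lo e = u).card = dplus (vlayer u))
    (hdm : ∀ u, 1 ≤ vlayer u →
        (Finset.univ.filter fun e => hi e = u).card = dminus (vlayer u))
    (hn : Odd n)
    (hWpos : ∀ i, 1 ≤ i → i ≤ n → 0 < Wt n elayer W0 Wn1 i)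
    (hC : C n elayer W0 Wn1 (n + 1) = 1)
    (RA RB : EuclideanSpace ℂ (E ⊕ Bool) →ₗ[ℂ] EuclideanSpace ℂ (E ⊕ Bool))
    (hRAneg : ∀ u, Even (vlayer u) → RA (psi lo hi s t W0 Wn1 u) = -psi lo hi s t W0 Wn1 u)
    (hRAid : ∀ x, (∀ u, Even (vlayer u) → (inner ℂ (psi lo hi s t W0 Wn1 u) x : ℂ) = 0) →
        RA x = x)
    (hRBneg : ∀ u, Odd (vlayer u) → RB (psi lo hi s t W0 Wn1 u) = -psi lo hi s t W0 Wn1 u)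
    (hRBid : ∀ x, (∀ u, Odd (vlayer u) → (inner ℂ (psi lo hi s t W0 Wn1 u) x : ℂ) = 0) →
        RB x = x) :
    ∃ v ∈ Submodule.span ℂ
        (Set.range (fun e : E => ket (Sum.inl e) : E → EuclideanSpace ℂ (E ⊕ Bool))),
      ‖v‖ ^ 2 ≤ (1 / 2) * ∑ k ∈ Finset.Icc 1 n,
          (C n elayer W0 Wn1 k + 1 / C n elayer W0 Wn1 k) ∧
      -(RB (RA (Lket n elayer W0 Wn1 0 + v)))
        = ((-1 : ℂ) ^ ((n + 1) / 2)) • Lket n elayer W0 Wn1 (n + 1) + v := by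
  obtain ⟨m', hm⟩ := hn
  have hn1 : 1 ≤ n := by omega
  have hWpos' : ∀ i, i ≤ n + 1 → 0 < Wt n elayer W0 Wn1 i := by
    intro i hi_
    by_cases h0 : i = 0
    · subst h0
      simpa [Wt] using hW0
    by_cases h1 : i = n+1
    · subst h1
      simpa [Wt] using hWn1
    · exact hWpos i (by omega) (by omega)
  have hW0eq : Wt n elayer W0 Wn1 0 = W0 := by simp [Wt]
  have hWn1eq : Wt n elayer W0 Wn1 (n+1) = Wn1 := by simp [Wt]
  refine ⟨∑ k ∈ Finset.Icc 1 n, (af n elayer W0 Wn1 k : ℂ) • Lket n elayer W0 Wn1 k,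
    ?_, ?_, ?_⟩
  · -- span membership
    refine Submodule.sum_mem _ (fun k hk => Submodule.smul_mem _ _ ?_)
    rw [Finset.mem_Icc] at hk
    rw [Lket_mid n elayer W0 Wn1 k hk.1 hk.2]
    exact Submodule.smul_mem _ _ (Submodule.sum_mem _ (fun e _ =>
      Submodule.subset_span ⟨e, rfl⟩))
  · -- norm bound
    have hvv : (inner ℂ (∑ k ∈ Finset.Icc 1 n, (af n elayer W0 Wn1 k : ℂ) • Lket n elayer W0 Wn1 k)
        (∑ k ∈ Finset.Icc 1 n, (af n elayer W0 Wn1 k : ℂ) • Lket n elayer W0 Wn1 k) : ℂ)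
        = ((∑ k ∈ Finset.Icc 1 n, (af n elayer W0 Wn1 k)^2 : ℝ) : ℂ) := by
      rw [sum_inner]
      push_cast
      refine Finset.sum_congr rfl (fun j hj => ?_)
      rw [Finset.mem_Icc] at hj
      rw [inner_smul_left, inner_sum]
      have hterm : ∀ k ∈ Finset.Icc 1 n,
          (inner ℂ (Lket n elayer W0 Wn1 j) ((af n elayer W0 Wn1 k : ℂ)
            • Lket n elayer W0 Wn1 k) : ℂ)
          = if j = k then ((af n elayer W0 Wn1 k : ℝ) : ℂ) else 0 := by
        intro k hk
        rw [Finset.mem_Icc] at hk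
        rw [inner_smul_right, Lket_ortho n elayer W0 Wn1 hWpos' j k hj.1 hj.2 hk.1 hk.2,
          mul_ite, mul_one, mul_zero]
      rw [Finset.sum_congr rfl hterm, Finset.sum_ite_eq (Finset.Icc 1 n) j,
        if_pos (Finset.mem_Icc.2 hj), Complex.conj_ofReal]
      ring
    have hnorm : ‖∑ k ∈ Finset.Icc 1 n, (af n elayer W0 Wn1 k : ℂ) • Lket n elayer W0 Wn1 k‖^2
        = ∑ k ∈ Finset.Icc 1 n, (af n elayer W0 Wn1 k)^2 := by
      rw [norm_sq_eq_re_inner (𝕜 := ℂ), hvv]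
      exact RCLike.ofReal_re _
    rw [hnorm, Finset.mul_sum]
    refine Finset.sum_le_sum (fun k hk => ?_)
    rw [Finset.mem_Icc] at hk
    have hsq := sC_pos n elayer W0 Wn1 hWpos' k (by omega)
    have hC2 : sCf n elayer W0 Wn1 k ^ 2 = C n elayer W0 Wn1 k :=
      Real.sq_sqrt (C_pos n elayer W0 Wn1 hWpos' k (by omega)).le
    have hε : ((-1:ℝ)^(k/2))^2 = 1 := by
      rw [← pow_mul]
      exact Even.neg_one_pow ⟨k/2, by ring⟩
    have hδ : ((-1:ℝ)^k) = 1 ∨ ((-1:ℝ)^k) = -1 := by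
      rcases Nat.even_or_odd k with h | h
      · exact Or.inl (Even.neg_one_pow h)
      · exact Or.inr (Odd.neg_one_pow h)
    have hb := abound (sCf n elayer W0 Wn1 k) ((-1:ℝ)^(k/2)) ((-1:ℝ)^k) hsq hε hδ
    have haf : af n elayer W0 Wn1 k
        = (-1:ℝ)^(k/2) * ((sCf n elayer W0 Wn1 k + (-1:ℝ)^k / sCf n elayer W0 Wn1 k)/2) := by
      rw [af]
      ring
    rw [haf]
    calc ((-1:ℝ)^(k/2) * ((sCf n elayer W0 Wn1 k + (-1:ℝ)^k / sCf n elayer W0 Wn1 k)/2))^2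
        ≤ 1/2 * (sCf n elayer W0 Wn1 k^2 + 1/sCf n elayer W0 Wn1 k^2) := hb
      _ = 1/2 * (C n elayer W0 Wn1 k + 1 / C n elayer W0 Wn1 k) := by rw [hC2]
  · -- the transduction equation
    have hveccsub : ∀ c d : ℕ → ℝ,
        vecc n elayer W0 Wn1 c - vecc n elayer W0 Wn1 d
          = ∑ k ∈ Finset.range (n+2), (((c k - d k : ℝ)) : ℂ) • Lket n elayer W0 Wn1 k := by
      intro c d
      rw [vecc, vecc, ← Finset.sum_sub_distrib]
      exact Finset.sum_congr rfl (fun k _ => by rw [← sub_smul]; norm_cast)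
    have hIdA : vecc n elayer W0 Wn1 (wf n elayer W0 Wn1)
          - vecc n elayer W0 Wn1 (xf n elayer W0 Wn1)
        = (2:ℂ) • ∑ j ∈ Finset.range (m'+1), (tAf n elayer W0 Wn1 j : ℂ) •
            sagg vlayer lo hi s t W0 Wn1 (2*j) := by
      rw [hveccsub, show n + 2 = 2*(m'+1) + 1 by omega, Finset.sum_range_succ, sum_range_pair,
        Finset.smul_sum]
      have hlast : (((wf n elayer W0 Wn1 (2*(m'+1)) - xf n elayer W0 Wn1 (2*(m'+1)) : ℝ)) : ℂ)
          • Lket n elayer W0 Wn1 (2*(m'+1)) = 0 := by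
        rw [show 2*(m'+1) = n+1 by omega, wf, if_pos rfl, xf,
          bf_top n elayer W0 Wn1 hWpos' ⟨m', hm⟩ hC]
        norm_num
      rw [hlast, add_zero]
      refine Finset.sum_congr rfl (fun j hj => ?_)
      rw [Finset.mem_range] at hj
      have hjn : 2*j+1 ≤ n := by omega
      rw [sagg_eq n vlayer elayer lo hi s t W0 Wn1 hn1 hel hlo hhi hs ht hWpos' hW0eq hWn1eq
        (2*j) (by omega)]
      have e1 : wf n elayer W0 Wn1 (2*j) - xf n elayer W0 Wn1 (2*j)
          = 2 * tAf n elayer W0 Wn1 j * rtf n elayer W0 Wn1 (2*j) := by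
        have := scalarA1 n elayer W0 Wn1 hWpos' j hjn
        linarith
      have e2 : wf n elayer W0 Wn1 (2*j+1) - xf n elayer W0 Wn1 (2*j+1)
          = 2 * tAf n elayer W0 Wn1 j * rtf n elayer W0 Wn1 (2*j+1) := by
        have := scalarA2 n elayer W0 Wn1 hWpos' j hjn
        linarith
      rw [e1, e2]
      simp only [rtf]
      push_cast
      module
    have hNA : (∑ j ∈ Finset.range (m'+1), (tAf n elayer W0 Wn1 j : ℂ) •
          sagg vlayer lo hi s t W0 Wn1 (2*j))
        = (2:ℂ)⁻¹ • (vecc n elayer W0 Wn1 (wf n elayer W0 Wn1)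
            - vecc n elayer W0 Wn1 (xf n elayer W0 Wn1)) := by
      rw [hIdA, smul_smul]
      norm_num
    have hOrthA : ∀ u, Even (vlayer u) → (inner ℂ (psi lo hi s t W0 Wn1 u)
        (vecc n elayer W0 Wn1 (wf n elayer W0 Wn1)
          - ∑ j ∈ Finset.range (m'+1), (tAf n elayer W0 Wn1 j : ℂ) •
              sagg vlayer lo hi s t W0 Wn1 (2*j)) : ℂ) = 0 := by
      intro u hu
      obtain ⟨j, hj2⟩ := hu
      have hvu := hvl u
      have hj : vlayer u = 2*j := by omega
      have hjn : 2*j+1 ≤ n := by omega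
      rw [hNA, inner_sub_right, inner_smul_right, inner_sub_right,
        inner_psi_vecc n vlayer elayer lo hi s t W0 Wn1 hvl hel hlo hhi hs hsu ht htu
          dplus dminus hdp hdm hWpos' u (wf n elayer W0 Wn1),
        inner_psi_vecc n vlayer elayer lo hi s t W0 Wn1 hvl hel hlo hhi hs hsu ht htu
          dplus dminus hdp hdm hWpos' u (xf n elayer W0 Wn1), hj]
      have h3 := scalarA3 n elayer W0 Wn1 hWpos' j hjn
      simp only [rtf] at h3
      have key : xf n elayer W0 Wn1 (2*j) * Real.sqrt (Wt n elayer W0 Wn1 (2*j))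
            + xf n elayer W0 Wn1 (2*j+1) * Real.sqrt (Wt n elayer W0 Wn1 (2*j+1))
          = -(wf n elayer W0 Wn1 (2*j) * Real.sqrt (Wt n elayer W0 Wn1 (2*j))
            + wf n elayer W0 Wn1 (2*j+1) * Real.sqrt (Wt n elayer W0 Wn1 (2*j+1))) := by
        linear_combination h3
      rw [key, neg_div]
      push_cast
      ring
    have hRAvec : RA (vecc n elayer W0 Wn1 (wf n elayer W0 Wn1))
        = vecc n elayer W0 Wn1 (xf n elayer W0 Wn1) := by
      have hRNA : RA (∑ j ∈ Finset.range (m'+1), (tAf n elayer W0 Wn1 j : ℂ) •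
            sagg vlayer lo hi s t W0 Wn1 (2*j))
          = -(∑ j ∈ Finset.range (m'+1), (tAf n elayer W0 Wn1 j : ℂ) •
              sagg vlayer lo hi s t W0 Wn1 (2*j)) := by
        rw [map_sum, ← Finset.sum_neg_distrib]
        refine Finset.sum_congr rfl (fun j hj => ?_)
        rw [map_smul, sagg_neg vlayer lo hi s t W0 Wn1 (fun i => Even i) RA hRAneg (2*j)
          ⟨j, by ring⟩, smul_neg]
      have hra := reflect_apply vlayer lo hi s t W0 Wn1 (fun i => Even i) RA hRAid
        (vecc n elayer W0 Wn1 (wf n elayer W0 Wn1))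
        (∑ j ∈ Finset.range (m'+1), (tAf n elayer W0 Wn1 j : ℂ) •
          sagg vlayer lo hi s t W0 Wn1 (2*j)) hRNA hOrthA
      rw [hra, ← hIdA]
      abel
    -- B step
    have hIdB : vecc n elayer W0 Wn1 (xf n elayer W0 Wn1)
          - vecc n elayer W0 Wn1 (yf n elayer W0 Wn1)
        = (2:ℂ) • ∑ j ∈ Finset.range (m'+1), (tBf n elayer W0 Wn1 j : ℂ) •
            sagg vlayer lo hi s t W0 Wn1 (2*j+1) := by
      rw [hveccsub, show n + 2 = 2*(m'+1) + 1 by omega, Finset.sum_range_succ', sum_range_pair,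
        Finset.smul_sum]
      have hfirst : (((xf n elayer W0 Wn1 0 - yf n elayer W0 Wn1 0 : ℝ)) : ℂ)
          • Lket n elayer W0 Wn1 0 = 0 := by
        rw [show yf n elayer W0 Wn1 0 = 0 from if_pos rfl, xf,
          bf_zero n elayer W0 Wn1 hWpos']
        norm_num
      rw [hfirst, add_zero]
      refine Finset.sum_congr rfl (fun j hj => ?_)
      rw [Finset.mem_range] at hj
      have hjn : 2*j+1 ≤ n := by omega
      rw [sagg_eq n vlayer elayer lo hi s t W0 Wn1 hn1 hel hlo hhi hs ht hWpos' hW0eq hWn1eq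
        (2*j+1) (by omega)]
      have e1 : xf n elayer W0 Wn1 (2*j+1) - yf n elayer W0 Wn1 (2*j+1)
          = 2 * tBf n elayer W0 Wn1 j * rtf n elayer W0 Wn1 (2*j+1) := by
        have := scalarB1 n elayer W0 Wn1 hWpos' j hjn
        linarith
      have e2 : xf n elayer W0 Wn1 (2*j+1+1) - yf n elayer W0 Wn1 (2*j+1+1)
          = 2 * tBf n elayer W0 Wn1 j * rtf n elayer W0 Wn1 (2*j+1+1) := by
        rw [show 2*j+1+1 = 2*j+2 from rfl]
        have := scalarB2 n elayer W0 Wn1 hWpos' j hjn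
        linarith
      rw [e1, e2]
      simp only [rtf]
      push_cast
      module
    have hNB : (∑ j ∈ Finset.range (m'+1), (tBf n elayer W0 Wn1 j : ℂ) •
          sagg vlayer lo hi s t W0 Wn1 (2*j+1))
        = (2:ℂ)⁻¹ • (vecc n elayer W0 Wn1 (xf n elayer W0 Wn1)
            - vecc n elayer W0 Wn1 (yf n elayer W0 Wn1)) := by
      rw [hIdB, smul_smul]
      norm_num
    have hOrthB : ∀ u, Odd (vlayer u) → (inner ℂ (psi lo hi s t W0 Wn1 u)
        (vecc n elayer W0 Wn1 (xf n elayer W0 Wn1)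
          - ∑ j ∈ Finset.range (m'+1), (tBf n elayer W0 Wn1 j : ℂ) •
              sagg vlayer lo hi s t W0 Wn1 (2*j+1)) : ℂ) = 0 := by
      intro u hu
      obtain ⟨j, hj2⟩ := hu
      have hvu := hvl u
      have hj : vlayer u = 2*j+1 := by omega
      have hjn : 2*j+1 ≤ n := by omega
      rw [hNB, inner_sub_right, inner_smul_right, inner_sub_right,
        inner_psi_vecc n vlayer elayer lo hi s t W0 Wn1 hvl hel hlo hhi hs hsu ht htu
          dplus dminus hdp hdm hWpos' u (xf n elayer W0 Wn1),
        inner_psi_vecc n vlayer elayer lo hi s t W0 Wn1 hvl hel hlo hhi hs hsu ht htu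
          dplus dminus hdp hdm hWpos' u (yf n elayer W0 Wn1), hj]
      have h3 := scalarB3 n elayer W0 Wn1 hWpos' j hjn
      simp only [rtf] at h3
      have key : yf n elayer W0 Wn1 (2*j+1) * Real.sqrt (Wt n elayer W0 Wn1 (2*j+1))
            + yf n elayer W0 Wn1 (2*j+1+1) * Real.sqrt (Wt n elayer W0 Wn1 (2*j+1+1))
          = -(xf n elayer W0 Wn1 (2*j+1) * Real.sqrt (Wt n elayer W0 Wn1 (2*j+1))
            + xf n elayer W0 Wn1 (2*j+1+1) * Real.sqrt (Wt n elayer W0 Wn1 (2*j+1+1))) := by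
        rw [show 2*j+1+1 = 2*j+2 from rfl]
        linear_combination h3
      rw [key, neg_div]
      push_cast
      ring
    have hRBvec : RB (vecc n elayer W0 Wn1 (xf n elayer W0 Wn1))
        = vecc n elayer W0 Wn1 (yf n elayer W0 Wn1) := by
      have hRNB : RB (∑ j ∈ Finset.range (m'+1), (tBf n elayer W0 Wn1 j : ℂ) •
            sagg vlayer lo hi s t W0 Wn1 (2*j+1))
          = -(∑ j ∈ Finset.range (m'+1), (tBf n elayer W0 Wn1 j : ℂ) •
              sagg vlayer lo hi s t W0 Wn1 (2*j+1)) := by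
        rw [map_sum, ← Finset.sum_neg_distrib]
        refine Finset.sum_congr rfl (fun j hj => ?_)
        rw [map_smul, sagg_neg vlayer lo hi s t W0 Wn1 (fun i => Odd i) RB hRBneg (2*j+1)
          ⟨j, by ring⟩, smul_neg]
      have hrb := reflect_apply vlayer lo hi s t W0 Wn1 (fun i => Odd i) RB hRBid
        (vecc n elayer W0 Wn1 (xf n elayer W0 Wn1))
        (∑ j ∈ Finset.range (m'+1), (tBf n elayer W0 Wn1 j : ℂ) •
          sagg vlayer lo hi s t W0 Wn1 (2*j+1)) hRNB hOrthB
      rw [hrb, ← hIdB]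
      abel
    -- assemble
    have hsetsplit : Finset.range (n+2) = insert 0 (insert (n+1) (Finset.Icc 1 n)) := by
      ext k
      simp only [Finset.mem_range, Finset.mem_insert, Finset.mem_Icc]
      omega
    have h0notin : (0:ℕ) ∉ insert (n+1) (Finset.Icc 1 n) := by
      simp only [Finset.mem_insert, Finset.mem_Icc]
      omega
    have hn1notin : (n+1) ∉ Finset.Icc 1 n := by
      simp only [Finset.mem_Icc]
      omega
    have hwk : ∀ k ∈ Finset.Icc 1 n,
        ((wf n elayer W0 Wn1 k : ℝ) : ℂ) • Lket n elayer W0 Wn1 k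
          = ((af n elayer W0 Wn1 k : ℝ) : ℂ) • Lket n elayer W0 Wn1 k := by
      intro k hk
      rw [Finset.mem_Icc] at hk
      rw [wf, if_neg (by omega)]
    have hyk : ∀ k ∈ Finset.Icc 1 n,
        ((yf n elayer W0 Wn1 k : ℝ) : ℂ) • Lket n elayer W0 Wn1 k
          = -(((af n elayer W0 Wn1 k : ℝ) : ℂ) • Lket n elayer W0 Wn1 k) := by
      intro k hk
      rw [Finset.mem_Icc] at hk
      rw [yf, if_neg (by omega)]
      push_cast
      rw [neg_smul]
    have hvecw : vecc n elayer W0 Wn1 (wf n elayer W0 Wn1)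
        = Lket n elayer W0 Wn1 0
          + ∑ k ∈ Finset.Icc 1 n, (af n elayer W0 Wn1 k : ℂ) • Lket n elayer W0 Wn1 k := by
      rw [vecc, hsetsplit, Finset.sum_insert h0notin, Finset.sum_insert hn1notin,
        Finset.sum_congr rfl hwk]
      have h1 : ((wf n elayer W0 Wn1 0 : ℝ) : ℂ) = 1 := by
        rw [wf, if_neg (by omega), af_zero n elayer W0 Wn1 hWpos']
        norm_num
      have h2 : ((wf n elayer W0 Wn1 (n+1) : ℝ) : ℂ) = 0 := by
        rw [wf, if_pos rfl]
        norm_num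
      rw [h1, h2]
      module
    have hvecy : -(vecc n elayer W0 Wn1 (yf n elayer W0 Wn1))
        = ((-1 : ℂ) ^ ((n + 1) / 2)) • Lket n elayer W0 Wn1 (n + 1)
          + ∑ k ∈ Finset.Icc 1 n, (af n elayer W0 Wn1 k : ℂ) • Lket n elayer W0 Wn1 k := by
      rw [vecc, hsetsplit, Finset.sum_insert h0notin, Finset.sum_insert hn1notin,
        Finset.sum_congr rfl hyk, Finset.sum_neg_distrib]
      have h1 : ((yf n elayer W0 Wn1 0 : ℝ) : ℂ) = 0 := by
        rw [yf, if_pos rfl]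
        norm_num
      have h2 : ((yf n elayer W0 Wn1 (n+1) : ℝ) : ℂ) = -((-1 : ℂ) ^ ((n + 1) / 2)) := by
        rw [yf, if_neg (by omega), af_top n elayer W0 Wn1 hWpos' ⟨m', hm⟩ hC]
        push_cast
        ring
      rw [h1, h2]
      module
    rw [show Lket n elayer W0 Wn1 0
        + ∑ k ∈ Finset.Icc 1 n, (af n elayer W0 Wn1 k : ℂ) • Lket n elayer W0 Wn1 k
        = vecc n elayer W0 Wn1 (wf n elayer W0 Wn1) from hvecw.symm, hRAvec, hRBvec]
    exact hvecy

end Stmt18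
end
end
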